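/- arXiv:2212.08289 — 6 statements merged into one kernel-verified Lean document; each statement's English description precedes it below -/
import Mathlib

section
/- Let μ > 0 and let p : [0,∞) → ℝ^ℕ be a solution of the mean-field ODE system d/dt p_n(t) = 𝓛[p(t)]_n (each t ↦ p_n(t) differentiable), with p_n(t) ≥ 0 for all n and t, and assume the series ∑_{n≥0} n²·p_n(t) converges uniformly on compact subsets of [0,∞). If p(0) ∈ V_μ, then p(t) ∈ V_μ for all t ≥ 0; that is, ∑_{n≥0} p_n(t) = 1 and ∑_{n≥0} n·p_n(t) = μ for every t ≥ 0. -/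
open Filter

/-- The poor-biased generator: `𝓛[p]_0 = p_1 - μ p_0` and, for `n ≥ 1`,
`𝓛[p]_n = (n+1) p_{n+1} + μ p_{n-1} - (n+μ) p_n`. -/
noncomputable def gen (μ : ℝ) (p : ℕ → ℝ) : ℕ → ℝ
  | 0 => p 1 - μ * p 0
  | n + 1 => ((n : ℝ) + 2) * p (n + 2) + μ * p n - (((n : ℝ) + 1) + μ) * p (n + 1)

/-- `V_μ`: probability mass functions on `ℕ` with mean `μ`. -/
def memV (μ : ℝ) (p : ℕ → ℝ) : Prop :=
  (∀ n, 0 ≤ p n) ∧ (∑' n : ℕ, p n = 1) ∧ (∑' n : ℕ, (n : ℝ) * p n = μ)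

/-- The series `∑_n f n t` converges uniformly on compact subsets of `[0, ∞)`. -/
def UnifConvOnCompacts (f : ℕ → ℝ → ℝ) : Prop :=
  ∀ K : Set ℝ, K ⊆ Set.Ici 0 → IsCompact K →
    TendstoUniformlyOn (fun (m : ℕ) (t : ℝ) => ∑ n ∈ Finset.range m, f n t)
      (fun t => ∑' n : ℕ, f n t) atTop K

/- ### Auxiliary lemmas -/

lemma sum_gen (μ : ℝ) (q : ℕ → ℝ) (N : ℕ) :
    ∑ n ∈ Finset.range (N + 1), gen μ q n = ((N : ℝ) + 1) * q (N + 1) - μ * q N := by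
  induction N with
  | zero => simp [gen]
  | succ N ih =>
      rw [Finset.sum_range_succ, ih]
      have hg : gen μ q (N + 1)
          = ((N : ℝ) + 2) * q (N + 2) + μ * q N - (((N : ℝ) + 1) + μ) * q (N + 1) := rfl
      rw [hg]
      push_cast
      ring

lemma sum_n_gen (μ : ℝ) (q : ℕ → ℝ) (N : ℕ) :
    ∑ n ∈ Finset.range (N + 1), (n : ℝ) * gen μ q n =
      (N : ℝ) * ((N : ℝ) + 1) * q (N + 1) - μ * (N : ℝ) * q N
        + μ * ∑ n ∈ Finset.range N, q n - ∑ n ∈ Finset.range (N + 1), (n : ℝ) * q n := by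
  induction N with
  | zero => simp [gen]
  | succ N ih =>
      rw [Finset.sum_range_succ, ih]
      have hg : gen μ q (N + 1)
          = ((N : ℝ) + 2) * q (N + 2) + μ * q N - (((N : ℝ) + 1) + μ) * q (N + 1) := rfl
      rw [hg]
      rw [Finset.sum_range_succ q N, Finset.sum_range_succ (fun n => (n : ℝ) * q n) (N + 1)]
      push_cast
      ring

lemma summable_sq_of_tendsto (f : ℕ → ℝ) (hf : ∀ n, 0 ≤ f n) (L : ℝ)
    (h : Tendsto (fun m => ∑ n ∈ Finset.range m, (n : ℝ) ^ 2 * f n) atTop (nhds L)) :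
    Summable (fun n : ℕ => (n : ℝ) ^ 2 * f n) := by
  have hmono : Monotone (fun m => ∑ n ∈ Finset.range m, (n : ℝ) ^ 2 * f n) := by
    intro a b hab
    exact Finset.sum_le_sum_of_subset_of_nonneg (Finset.range_subset_range.2 hab)
      (fun n _ _ => mul_nonneg (by positivity) (hf n))
  exact summable_of_sum_range_le (c := L) (fun n => mul_nonneg (by positivity) (hf n))
    (fun m => hmono.ge_of_tendsto h m)

lemma summable_of_sq (f : ℕ → ℝ) (hf : ∀ n, 0 ≤ f n)
    (h : Summable fun n : ℕ => (n : ℝ) ^ 2 * f n) : Summable f := by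
  have h1 : Summable (fun n : ℕ => ((n + 1 : ℕ) : ℝ) ^ 2 * f (n + 1)) :=
    (summable_nat_add_iff 1).2 h
  have h2 : Summable (fun n : ℕ => f (n + 1)) := by
    apply Summable.of_nonneg_of_le (fun n => hf _) _ h1
    intro n
    have h3 : (1 : ℝ) ≤ ((n + 1 : ℕ) : ℝ) ^ 2 := by
      have : (1 : ℝ) ≤ ((n + 1 : ℕ) : ℝ) := by
        exact_mod_cast Nat.one_le_iff_ne_zero.2 (Nat.succ_ne_zero n)
      nlinarith
    exact le_mul_of_one_le_left (hf _) h3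
  exact (summable_nat_add_iff 1).1 h2

lemma nat_le_sq (n : ℕ) : (n : ℝ) ≤ (n : ℝ) ^ 2 := by
  rcases Nat.eq_zero_or_pos n with h | h
  · simp [h]
  · have h1 : (1 : ℝ) ≤ (n : ℝ) := by exact_mod_cast h
    nlinarith

lemma summable_mul_of_sq (f : ℕ → ℝ) (hf : ∀ n, 0 ≤ f n)
    (h : Summable fun n : ℕ => (n : ℝ) ^ 2 * f n) : Summable fun n : ℕ => (n : ℝ) * f n := by
  apply Summable.of_nonneg_of_le (fun n => mul_nonneg (Nat.cast_nonneg n) (hf n)) _ h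
  exact fun n => mul_le_mul_of_nonneg_right (nat_le_sq n) (hf n)

lemma term_le_tail (f : ℕ → ℝ) (hf : ∀ n, 0 ≤ f n) (h : Summable f) (N : ℕ) :
    f N ≤ (∑' n : ℕ, f n) - ∑ n ∈ Finset.range N, f n := by
  have h1 : ∑ n ∈ Finset.range (N + 1), f n ≤ ∑' n : ℕ, f n :=
    Summable.sum_le_tsum _ (fun n _ => hf n) h
  rw [Finset.sum_range_succ] at h1
  linarith

lemma sum_le_tsum' (f : ℕ → ℝ) (hf : ∀ n, 0 ≤ f n) (h : Summable f) (N : ℕ) :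
    ∑ n ∈ Finset.range N, f n ≤ ∑' n : ℕ, f n :=
  Summable.sum_le_tsum _ (fun n _ => hf n) h

set_option maxHeartbeats 1000000 in
lemma tail_le_tail (f : ℕ → ℝ) (hf : ∀ n, 0 ≤ f n)
    (h2 : Summable fun n : ℕ => (n : ℝ) ^ 2 * f n) (N : ℕ) (hN : 1 ≤ N) :
    (∑' n : ℕ, f n) - ∑ n ∈ Finset.range N, f n ≤
      (∑' n : ℕ, (n : ℝ) ^ 2 * f n) - ∑ n ∈ Finset.range N, (n : ℝ) ^ 2 * f n := by
  have hs := summable_of_sq f hf h2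
  have e1 := Summable.sum_add_tsum_nat_add (f := f) N hs
  have e2 := Summable.sum_add_tsum_nat_add (f := fun n : ℕ => (n : ℝ) ^ 2 * f n) N h2
  have s1 : Summable (fun k : ℕ => f (k + N)) := (summable_nat_add_iff (f := f) N).2 hs
  have s2 : Summable (fun k : ℕ => ((k + N : ℕ) : ℝ) ^ 2 * f (k + N)) :=
    (summable_nat_add_iff (f := fun n : ℕ => (n : ℝ) ^ 2 * f n) N).2 h2
  have key : ∑' (k : ℕ), f (k + N) ≤ ∑' (k : ℕ), ((k + N : ℕ) : ℝ) ^ 2 * f (k + N) := by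
    refine Summable.tsum_le_tsum ?_ s1 s2
    intro k
    have h1 : (1 : ℝ) ≤ ((k + N : ℕ) : ℝ) ^ 2 := by
      have : (1 : ℝ) ≤ ((k + N : ℕ) : ℝ) := by
        exact_mod_cast Nat.one_le_iff_ne_zero.2 (by omega)
      nlinarith
    exact le_mul_of_one_le_left (hf _) h1
  push_cast at key e1 e2 ⊢
  linarith

set_option maxHeartbeats 1000000 in
lemma tail_mul_le_tail (f : ℕ → ℝ) (hf : ∀ n, 0 ≤ f n)
    (h2 : Summable fun n : ℕ => (n : ℝ) ^ 2 * f n) (N : ℕ) :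
    (∑' n : ℕ, (n : ℝ) * f n) - ∑ n ∈ Finset.range N, (n : ℝ) * f n ≤
      (∑' n : ℕ, (n : ℝ) ^ 2 * f n) - ∑ n ∈ Finset.range N, (n : ℝ) ^ 2 * f n := by
  have hs := summable_mul_of_sq f hf h2
  have e1 := Summable.sum_add_tsum_nat_add (f := fun n : ℕ => (n : ℝ) * f n) N hs
  have e2 := Summable.sum_add_tsum_nat_add (f := fun n : ℕ => (n : ℝ) ^ 2 * f n) N h2
  have s1 : Summable (fun k : ℕ => ((k + N : ℕ) : ℝ) * f (k + N)) :=
    (summable_nat_add_iff (f := fun n : ℕ => (n : ℝ) * f n) N).2 hs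
  have s2 : Summable (fun k : ℕ => ((k + N : ℕ) : ℝ) ^ 2 * f (k + N)) :=
    (summable_nat_add_iff (f := fun n : ℕ => (n : ℝ) ^ 2 * f n) N).2 h2
  have key : ∑' (k : ℕ), ((k + N : ℕ) : ℝ) * f (k + N)
      ≤ ∑' (k : ℕ), ((k + N : ℕ) : ℝ) ^ 2 * f (k + N) := by
    refine Summable.tsum_le_tsum ?_ s1 s2
    exact fun k => mul_le_mul_of_nonneg_right (nat_le_sq _) (hf _)
  push_cast at key e1 e2 ⊢
  linarith

set_option maxHeartbeats 4000000 in
/-- Invariance of `V_μ` under the mean-field evolution `d/dt p(t) = 𝓛[p(t)]`. -/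
theorem V_invariant (μ : ℝ) (hμ : 0 < μ) (p : ℝ → ℕ → ℝ)
    (hode : ∀ t ∈ Set.Ici (0 : ℝ), ∀ n : ℕ,
      HasDerivWithinAt (fun s => p s n) (gen μ (p t) n) (Set.Ici 0) t)
    (hpos : ∀ t ∈ Set.Ici (0 : ℝ), ∀ n : ℕ, 0 ≤ p t n)
    (hunif : UnifConvOnCompacts (fun n t => (n : ℝ) ^ 2 * p t n))
    (h0 : memV μ (p 0)) :
    ∀ t ∈ Set.Ici (0 : ℝ), (∑' n : ℕ, p t n = 1) ∧ (∑' n : ℕ, (n : ℝ) * p t n = μ) := by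
  obtain ⟨hpos0, hS0, hM0⟩ := h0
  have hcont : ∀ n, ContinuousOn (fun s => p s n) (Set.Ici 0) :=
    fun n t ht => (hode t ht n).continuousWithinAt
  have hgencont : ∀ n, ContinuousOn (fun s => gen μ (p s) n) (Set.Ici 0) := by
    intro n
    match n with
    | 0 =>
        show ContinuousOn (fun s => p s 1 - μ * p s 0) (Set.Ici 0)
        exact (hcont 1).sub (continuousOn_const.mul (hcont 0))
    | n + 1 =>
        show ContinuousOn (fun s => ((n : ℝ) + 2) * p s (n + 2) + μ * p s n
          - (((n : ℝ) + 1) + μ) * p s (n + 1)) (Set.Ici 0)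
        exact ((continuousOn_const.mul (hcont (n + 2))).add
          (continuousOn_const.mul (hcont n))).sub (continuousOn_const.mul (hcont (n + 1)))
  have hintg : ∀ t ∈ Set.Ici (0 : ℝ), ∀ n, IntervalIntegrable (fun s => gen μ (p s) n)
      MeasureTheory.volume 0 t := by
    intro t ht n
    apply ContinuousOn.intervalIntegrable
    rw [Set.uIcc_of_le ht]
    exact (hgencont n).mono Set.Icc_subset_Ici_self
  have hftc : ∀ t ∈ Set.Ici (0 : ℝ), ∀ n,
      ∫ s in (0 : ℝ)..t, gen μ (p s) n = p t n - p 0 n := by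
    intro t ht n
    apply intervalIntegral.integral_eq_sub_of_hasDeriv_right_of_le ht
    · exact (hcont n).mono Set.Icc_subset_Ici_self
    · intro x hx
      exact (hode x hx.1.le n).mono (fun y hy => (hx.1.trans hy).le)
    · exact hintg t ht n
  have key1 : ∀ t ∈ Set.Ici (0 : ℝ), ∀ N : ℕ,
      ∑ n ∈ Finset.range (N + 1), p t n = ∑ n ∈ Finset.range (N + 1), p 0 n
        + ∫ s in (0 : ℝ)..t, (((N : ℝ) + 1) * p s (N + 1) - μ * p s N) := by
    intro t ht N
    have h1 : ∑ n ∈ Finset.range (N + 1), (p t n - p 0 n)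
        = ∫ s in (0 : ℝ)..t, ∑ n ∈ Finset.range (N + 1), gen μ (p s) n := by
      rw [intervalIntegral.integral_finset_sum (fun n _ => hintg t ht n)]
      exact Finset.sum_congr rfl fun n _ => (hftc t ht n).symm
    simp only [sum_gen] at h1
    rw [Finset.sum_sub_distrib] at h1
    linarith [h1]
  have key2 : ∀ t ∈ Set.Ici (0 : ℝ), ∀ N : ℕ,
      ∑ n ∈ Finset.range (N + 1), (n : ℝ) * p t n
        = ∑ n ∈ Finset.range (N + 1), (n : ℝ) * p 0 n
        + ∫ s in (0 : ℝ)..t, ((N : ℝ) * ((N : ℝ) + 1) * p s (N + 1) - μ * (N : ℝ) * p s N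
            + μ * ∑ n ∈ Finset.range N, p s n - ∑ n ∈ Finset.range (N + 1), (n : ℝ) * p s n) := by
    intro t ht N
    have h1 : ∑ n ∈ Finset.range (N + 1), ((n : ℝ) * p t n - (n : ℝ) * p 0 n)
        = ∫ s in (0 : ℝ)..t, ∑ n ∈ Finset.range (N + 1), (n : ℝ) * gen μ (p s) n := by
      rw [intervalIntegral.integral_finset_sum
        (fun n _ => (hintg t ht n).const_mul ((n : ℝ)))]
      refine Finset.sum_congr rfl fun n _ => ?_
      rw [intervalIntegral.integral_const_mul, hftc t ht n, mul_sub]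
    simp only [sum_n_gen] at h1
    rw [Finset.sum_sub_distrib] at h1
    linarith [h1]
  -- summability
  have hsum2 : ∀ s ∈ Set.Ici (0 : ℝ), Summable (fun n : ℕ => (n : ℝ) ^ 2 * p s n) := by
    intro s hs
    have hU := hunif (Set.Icc 0 s) Set.Icc_subset_Ici_self isCompact_Icc
    exact summable_sq_of_tendsto _ (fun n => hpos s hs n) _
      (hU.tendsto_at (Set.right_mem_Icc.2 hs))
  have hsum0 : ∀ s ∈ Set.Ici (0 : ℝ), Summable (p s) :=
    fun s hs => summable_of_sq _ (hpos s hs) (hsum2 s hs)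
  have hsum1 : ∀ s ∈ Set.Ici (0 : ℝ), Summable (fun n : ℕ => (n : ℝ) * p s n) :=
    fun s hs => summable_mul_of_sq _ (hpos s hs) (hsum2 s hs)
  -- mass conservation
  have hmass : ∀ t ∈ Set.Ici (0 : ℝ), ∑' n : ℕ, p t n = 1 := by
    intro t ht
    have hlim1 : Tendsto (fun N : ℕ => ∑ n ∈ Finset.range (N + 1), p t n) atTop
        (nhds (∑' n : ℕ, p t n)) :=
      (hsum0 t ht).hasSum.tendsto_sum_nat.comp (tendsto_add_atTop_nat 1)
    have hlim0 : Tendsto (fun N : ℕ => ∑ n ∈ Finset.range (N + 1), p 0 n) atTop (nhds 1) := by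
      have h := (hsum0 0 Set.self_mem_Ici).hasSum.tendsto_sum_nat
      rw [hS0] at h
      exact h.comp (tendsto_add_atTop_nat 1)
    have hI : Tendsto (fun N : ℕ =>
        ∫ s in (0 : ℝ)..t, (((N : ℝ) + 1) * p s (N + 1) - μ * p s N)) atTop (nhds 0) := by
      rw [NormedAddCommGroup.tendsto_nhds_zero]
      intro ε hε
      have ht0 : (0 : ℝ) ≤ t := ht
      have hden : (0 : ℝ) < (1 + μ) * (t + 1) := by nlinarith
      set ε' := ε / ((1 + μ) * (t + 1)) with hε'def
      have hε' : 0 < ε' := div_pos hε hden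
      have hU := Metric.tendstoUniformlyOn_iff.1
        (hunif (Set.Icc 0 t) Set.Icc_subset_Ici_self isCompact_Icc) ε' hε'
      rw [eventually_atTop] at hU ⊢
      obtain ⟨N₀, hN₀⟩ := hU
      refine ⟨max N₀ 1, fun N hN => ?_⟩
      have hN1 : 1 ≤ N := le_trans (le_max_right _ _) hN
      have hNN : N₀ ≤ N := le_trans (le_max_left _ _) hN
      have hbound : ∀ s ∈ Set.uIoc (0 : ℝ) t,
          ‖((N : ℝ) + 1) * p s (N + 1) - μ * p s N‖ ≤ (1 + μ) * ε' := by
        rw [Set.uIoc_of_le ht]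
        intro s hs
        have hs' : s ∈ Set.Icc (0 : ℝ) t := Set.Ioc_subset_Icc_self hs
        have hs0 : (0 : ℝ) ≤ s := hs'.1
        have hsum2s := hsum2 s hs0
        have hd1 := hN₀ N hNN s hs'
        have hd2 := hN₀ (N + 1) (le_trans hNN (Nat.le_succ N)) s hs'
        rw [Real.dist_eq] at hd1 hd2
        have ht1 : (∑' n : ℕ, (n : ℝ) ^ 2 * p s n)
            - ∑ n ∈ Finset.range N, (n : ℝ) ^ 2 * p s n < ε' :=
          lt_of_le_of_lt (le_abs_self _) hd1
        have ht2 : (∑' n : ℕ, (n : ℝ) ^ 2 * p s n)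
            - ∑ n ∈ Finset.range (N + 1), (n : ℝ) ^ 2 * p s n < ε' :=
          lt_of_le_of_lt (le_abs_self _) hd2
        have hterm1 : ((N + 1 : ℕ) : ℝ) ^ 2 * p s (N + 1)
            ≤ (∑' n : ℕ, (n : ℝ) ^ 2 * p s n)
              - ∑ n ∈ Finset.range (N + 1), (n : ℝ) ^ 2 * p s n :=
          term_le_tail _ (fun n => mul_nonneg (by positivity) (hpos s hs0 n)) hsum2s (N + 1)
        have hterm2 : ((N : ℕ) : ℝ) ^ 2 * p s N
            ≤ (∑' n : ℕ, (n : ℝ) ^ 2 * p s n)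
              - ∑ n ∈ Finset.range N, (n : ℝ) ^ 2 * p s n :=
          term_le_tail _ (fun n => mul_nonneg (by positivity) (hpos s hs0 n)) hsum2s N
        have ha1 : ((N : ℝ) + 1) * p s (N + 1) ≤ ((N + 1 : ℕ) : ℝ) ^ 2 * p s (N + 1) := by
          have := mul_le_mul_of_nonneg_right (nat_le_sq (N + 1)) (hpos s hs0 (N + 1))
          push_cast at this ⊢
          linarith
        have ha2 : p s N ≤ ((N : ℕ) : ℝ) ^ 2 * p s N := by
          apply le_mul_of_one_le_left (hpos s hs0 N)
          have h1 : (1 : ℝ) ≤ (N : ℝ) := by exact_mod_cast hN1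
          nlinarith
        have hb1 : 0 ≤ ((N : ℝ) + 1) * p s (N + 1) :=
          mul_nonneg (by positivity) (hpos s hs0 (N + 1))
        have hb2 : 0 ≤ p s N := hpos s hs0 N
        have hA : ((N : ℝ) + 1) * p s (N + 1) ≤ ε' := le_trans ha1 (le_trans hterm1 ht2.le)
        have hBp : p s N ≤ ε' := le_trans ha2 (le_trans hterm2 ht1.le)
        have hB : μ * p s N ≤ μ * ε' := mul_le_mul_of_nonneg_left hBp hμ.le
        have hB0 : 0 ≤ μ * p s N := mul_nonneg hμ.le hb2
        rw [Real.norm_eq_abs, abs_le]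
        constructor
        · linarith [mul_nonneg hμ.le hε'.le]
        · linarith [mul_nonneg hμ.le hε'.le]
      have hnorm := intervalIntegral.norm_integral_le_of_norm_le_const hbound
      have habs : |t - 0| = t := by rw [sub_zero, abs_of_nonneg ht]
      rw [habs] at hnorm
      have hfin : (1 + μ) * ε' * t < ε := by
        have h2 : (1 + μ) * ε' * t = ε * t / (t + 1) := by
          rw [hε'def]; field_simp
        rw [h2, div_lt_iff₀ (by linarith)]
        nlinarith
      exact lt_of_le_of_lt hnorm hfin
    have hlim2 : Tendsto (fun N : ℕ => ∑ n ∈ Finset.range (N + 1), p 0 n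
        + ∫ s in (0 : ℝ)..t, (((N : ℝ) + 1) * p s (N + 1) - μ * p s N)) atTop (nhds 1) := by
      have := hlim0.add hI
      rwa [add_zero] at this
    have heq : (fun N : ℕ => ∑ n ∈ Finset.range (N + 1), p t n)
        = (fun N : ℕ => ∑ n ∈ Finset.range (N + 1), p 0 n
          + ∫ s in (0 : ℝ)..t, (((N : ℝ) + 1) * p s (N + 1) - μ * p s N)) :=
      funext (key1 t ht)
    rw [heq] at hlim1
    exact tendsto_nhds_unique hlim1 hlim2
  -- uniform convergence of first-moment partial sums, continuity of the mean
  have hMunif : ∀ T ∈ Set.Ici (0 : ℝ), TendstoUniformlyOn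
      (fun (N : ℕ) (s : ℝ) => ∑ n ∈ Finset.range N, (n : ℝ) * p s n)
      (fun s => ∑' n : ℕ, (n : ℝ) * p s n) atTop (Set.Icc 0 T) := by
    intro T hT
    rw [Metric.tendstoUniformlyOn_iff]
    intro ε hε
    have hU := Metric.tendstoUniformlyOn_iff.1
      (hunif (Set.Icc 0 T) Set.Icc_subset_Ici_self isCompact_Icc) (ε / 2) (half_pos hε)
    filter_upwards [hU] with N hN s hs
    have hs0 : (0 : ℝ) ≤ s := hs.1
    have h1 := tail_mul_le_tail (p s) (hpos s hs0) (hsum2 s hs0) N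
    have hd := hN s hs
    rw [Real.dist_eq] at hd
    have h2 : (∑' n : ℕ, (n : ℝ) ^ 2 * p s n)
        - ∑ n ∈ Finset.range N, (n : ℝ) ^ 2 * p s n < ε / 2 :=
      lt_of_le_of_lt (le_abs_self _) hd
    have h3 : ∑ n ∈ Finset.range N, (n : ℝ) * p s n ≤ ∑' n : ℕ, (n : ℝ) * p s n :=
      sum_le_tsum' _ (fun n => mul_nonneg (Nat.cast_nonneg n) (hpos s hs0 n)) (hsum1 s hs0) N
    rw [Real.dist_eq, abs_of_nonneg (by linarith)]
    linarith
  have hMcontIcc : ∀ T ∈ Set.Ici (0 : ℝ),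
      ContinuousOn (fun s => ∑' n : ℕ, (n : ℝ) * p s n) (Set.Icc 0 T) := by
    intro T hT
    apply (hMunif T hT).continuousOn
    apply Filter.Eventually.frequently
    filter_upwards with N
    exact continuousOn_finset_sum _ fun n _ =>
      continuousOn_const.mul ((hcont n).mono Set.Icc_subset_Ici_self)
  have hMcont : ContinuousOn (fun s => ∑' n : ℕ, (n : ℝ) * p s n) (Set.Ici 0) := by
    intro x hx
    have hx0 : (0 : ℝ) ≤ x := hx
    have h1 := hMcontIcc (x + 1) (by simp only [Set.mem_Ici]; linarith) x ⟨hx0, by linarith⟩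
    apply h1.mono_of_mem_nhdsWithin
    have h2 : Set.Ici (0 : ℝ) ∩ Set.Iio (x + 1) ∈ nhdsWithin x (Set.Ici 0) :=
      inter_mem_nhdsWithin _ (Iio_mem_nhds (by linarith))
    exact Filter.mem_of_superset h2 (fun y hy => ⟨hy.1, hy.2.le⟩)
  -- integral equation for the mean
  have hMint : ∀ t ∈ Set.Ici (0 : ℝ), ∑' n : ℕ, (n : ℝ) * p t n
      = μ + ∫ s in (0 : ℝ)..t, (μ - ∑' n : ℕ, (n : ℝ) * p s n) := by
    intro t ht
    have ht0 : (0 : ℝ) ≤ t := ht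
    have hlimB : Tendsto (fun N : ℕ => ∑ n ∈ Finset.range (N + 1), (n : ℝ) * p t n) atTop
        (nhds (∑' n : ℕ, (n : ℝ) * p t n)) :=
      (hsum1 t ht).hasSum.tendsto_sum_nat.comp (tendsto_add_atTop_nat 1)
    have hlimC : Tendsto (fun N : ℕ => ∑ n ∈ Finset.range (N + 1), (n : ℝ) * p 0 n) atTop
        (nhds μ) := by
      have h := (hsum1 0 Set.self_mem_Ici).hasSum.tendsto_sum_nat
      rw [hM0] at h
      exact h.comp (tendsto_add_atTop_nat 1)
    have hMint0 : IntervalIntegrable (fun s => μ - ∑' n : ℕ, (n : ℝ) * p s n)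
        MeasureTheory.volume 0 t := by
      apply ContinuousOn.intervalIntegrable
      rw [Set.uIcc_of_le ht0]
      exact continuousOn_const.sub (hMcont.mono Set.Icc_subset_Ici_self)
    have hGint : ∀ N : ℕ, IntervalIntegrable (fun s => (N : ℝ) * ((N : ℝ) + 1) * p s (N + 1)
        - μ * (N : ℝ) * p s N + μ * ∑ n ∈ Finset.range N, p s n
        - ∑ n ∈ Finset.range (N + 1), (n : ℝ) * p s n) MeasureTheory.volume 0 t := by
      intro N
      apply ContinuousOn.intervalIntegrable
      rw [Set.uIcc_of_le ht0]
      have c1 : ContinuousOn (fun s => (N : ℝ) * ((N : ℝ) + 1) * p s (N + 1)) (Set.Icc 0 t) :=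
        continuousOn_const.mul ((hcont (N + 1)).mono Set.Icc_subset_Ici_self)
      have c2 : ContinuousOn (fun s => μ * (N : ℝ) * p s N) (Set.Icc 0 t) :=
        continuousOn_const.mul ((hcont N).mono Set.Icc_subset_Ici_self)
      have c3 : ContinuousOn (fun s => μ * ∑ n ∈ Finset.range N, p s n) (Set.Icc 0 t) :=
        continuousOn_const.mul (continuousOn_finset_sum _ (fun n _ =>
          (hcont n).mono Set.Icc_subset_Ici_self))
      have c4 : ContinuousOn (fun s => ∑ n ∈ Finset.range (N + 1), (n : ℝ) * p s n)
          (Set.Icc 0 t) :=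
        continuousOn_finset_sum _ (fun n _ =>
          continuousOn_const.mul ((hcont n).mono Set.Icc_subset_Ici_self))
      exact ((c1.sub c2).add c3).sub c4
    have hJ : Tendsto (fun N : ℕ => ∫ s in (0 : ℝ)..t, ((N : ℝ) * ((N : ℝ) + 1) * p s (N + 1)
        - μ * (N : ℝ) * p s N + μ * ∑ n ∈ Finset.range N, p s n
        - ∑ n ∈ Finset.range (N + 1), (n : ℝ) * p s n)) atTop
        (nhds (∫ s in (0 : ℝ)..t, (μ - ∑' n : ℕ, (n : ℝ) * p s n))) := by
      rw [Metric.tendsto_atTop]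
      intro ε hε
      have hden : (0 : ℝ) < (2 + 2 * μ) * (t + 1) := by nlinarith
      set ε' := ε / ((2 + 2 * μ) * (t + 1)) with hε'def
      have hε' : 0 < ε' := div_pos hε hden
      have hU := Metric.tendstoUniformlyOn_iff.1
        (hunif (Set.Icc 0 t) Set.Icc_subset_Ici_self isCompact_Icc) ε' hε'
      rw [eventually_atTop] at hU
      obtain ⟨N₀, hN₀⟩ := hU
      refine ⟨max N₀ 1, fun N hN => ?_⟩
      have hN1 : 1 ≤ N := le_trans (le_max_right _ _) hN
      have hNN : N₀ ≤ N := le_trans (le_max_left _ _) hN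
      rw [Real.dist_eq, ← intervalIntegral.integral_sub (hGint N) hMint0, ← Real.norm_eq_abs]
      have hbound : ∀ s ∈ Set.uIoc (0 : ℝ) t,
          ‖((N : ℝ) * ((N : ℝ) + 1) * p s (N + 1) - μ * (N : ℝ) * p s N
            + μ * ∑ n ∈ Finset.range N, p s n - ∑ n ∈ Finset.range (N + 1), (n : ℝ) * p s n)
            - (μ - ∑' n : ℕ, (n : ℝ) * p s n)‖ ≤ (2 + 2 * μ) * ε' := by
        rw [Set.uIoc_of_le ht0]
        intro s hs
        have hs' : s ∈ Set.Icc (0 : ℝ) t := Set.Ioc_subset_Icc_self hs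
        have hs0 : (0 : ℝ) ≤ s := hs'.1
        have hsum2s := hsum2 s hs0
        have hd1 := hN₀ N hNN s hs'
        have hd2 := hN₀ (N + 1) (le_trans hNN (Nat.le_succ N)) s hs'
        rw [Real.dist_eq] at hd1 hd2
        have ht1 : (∑' n : ℕ, (n : ℝ) ^ 2 * p s n)
            - ∑ n ∈ Finset.range N, (n : ℝ) ^ 2 * p s n < ε' :=
          lt_of_le_of_lt (le_abs_self _) hd1
        have ht2 : (∑' n : ℕ, (n : ℝ) ^ 2 * p s n)
            - ∑ n ∈ Finset.range (N + 1), (n : ℝ) ^ 2 * p s n < ε' :=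
          lt_of_le_of_lt (le_abs_self _) hd2
        have hterm1 : ((N + 1 : ℕ) : ℝ) ^ 2 * p s (N + 1)
            ≤ (∑' n : ℕ, (n : ℝ) ^ 2 * p s n)
              - ∑ n ∈ Finset.range (N + 1), (n : ℝ) ^ 2 * p s n :=
          term_le_tail _ (fun n => mul_nonneg (by positivity) (hpos s hs0 n)) hsum2s (N + 1)
        have hterm2 : ((N : ℕ) : ℝ) ^ 2 * p s N
            ≤ (∑' n : ℕ, (n : ℝ) ^ 2 * p s n)
              - ∑ n ∈ Finset.range N, (n : ℝ) ^ 2 * p s n :=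
          term_le_tail _ (fun n => mul_nonneg (by positivity) (hpos s hs0 n)) hsum2s N
        -- piece 1
        have hpos1 := hpos s hs0 (N + 1)
        have ha1 : (N : ℝ) * ((N : ℝ) + 1) * p s (N + 1)
            ≤ ((N + 1 : ℕ) : ℝ) ^ 2 * p s (N + 1) := by
          push_cast
          nlinarith [Nat.cast_nonneg (α := ℝ) N]
        have f1 : 0 ≤ (N : ℝ) * ((N : ℝ) + 1) * p s (N + 1) := by positivity
        have f2 : (N : ℝ) * ((N : ℝ) + 1) * p s (N + 1) ≤ ε' :=
          le_trans ha1 (le_trans hterm1 ht2.le)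
        -- piece 2
        have hposN := hpos s hs0 N
        have ha2 : (N : ℝ) * p s N ≤ ((N : ℕ) : ℝ) ^ 2 * p s N :=
          mul_le_mul_of_nonneg_right (nat_le_sq N) hposN
        have f3 : 0 ≤ μ * ((N : ℝ) * p s N) :=
          mul_nonneg hμ.le (mul_nonneg (Nat.cast_nonneg N) hposN)
        have f4 : μ * ((N : ℝ) * p s N) ≤ μ * ε' :=
          mul_le_mul_of_nonneg_left (le_trans ha2 (le_trans hterm2 ht1.le)) hμ.le
        -- piece 3 : mass partial sums
        have hS1 : ∑ n ∈ Finset.range N, p s n ≤ 1 := by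
          have := sum_le_tsum' (p s) (hpos s hs0) (hsum0 s hs0) N
          rw [hmass s hs0] at this
          exact this
        have hS2 : 1 - ∑ n ∈ Finset.range N, p s n ≤ ε' := by
          have h1 := tail_le_tail (p s) (hpos s hs0) hsum2s N hN1
          rw [hmass s hs0] at h1
          linarith
        -- piece 4 : first-moment partial sums
        have hM1 : ∑ n ∈ Finset.range (N + 1), (n : ℝ) * p s n
            ≤ ∑' n : ℕ, (n : ℝ) * p s n :=
          sum_le_tsum' _ (fun n => mul_nonneg (Nat.cast_nonneg n) (hpos s hs0 n))
            (hsum1 s hs0) (N + 1)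
        have hM2 : (∑' n : ℕ, (n : ℝ) * p s n)
            - ∑ n ∈ Finset.range (N + 1), (n : ℝ) * p s n ≤ ε' := by
          have h1 := tail_mul_le_tail (p s) (hpos s hs0) hsum2s (N + 1)
          linarith
        have hμε : 0 ≤ μ * ε' := mul_nonneg hμ.le hε'.le
        have hc1 : 0 ≤ μ - μ * ∑ n ∈ Finset.range N, p s n := by nlinarith
        have hc2 : μ - μ * ∑ n ∈ Finset.range N, p s n ≤ μ * ε' := by nlinarith
        rw [Real.norm_eq_abs, abs_le]
        constructor
        · linarith
        · linarith
      have hnorm := intervalIntegral.norm_integral_le_of_norm_le_const hbound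
      have habs : |t - 0| = t := by rw [sub_zero, abs_of_nonneg ht0]
      rw [habs] at hnorm
      have hfin : (2 + 2 * μ) * ε' * t < ε := by
        have h2 : (2 + 2 * μ) * ε' * t = ε * t / (t + 1) := by
          rw [hε'def]; field_simp
        rw [h2, div_lt_iff₀ (by linarith)]
        nlinarith
      exact lt_of_le_of_lt hnorm hfin
    have hlim2 := hlimC.add hJ
    have heq : (fun N : ℕ => ∑ n ∈ Finset.range (N + 1), (n : ℝ) * p t n)
        = (fun N : ℕ => ∑ n ∈ Finset.range (N + 1), (n : ℝ) * p 0 n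
          + ∫ s in (0 : ℝ)..t, ((N : ℝ) * ((N : ℝ) + 1) * p s (N + 1)
            - μ * (N : ℝ) * p s N + μ * ∑ n ∈ Finset.range N, p s n
            - ∑ n ∈ Finset.range (N + 1), (n : ℝ) * p s n)) :=
      funext (key2 t ht)
    rw [heq] at hlimB
    exact tendsto_nhds_unique hlimB hlim2
  -- solve the mean ODE
  have hmean : ∀ t ∈ Set.Ici (0 : ℝ), ∑' n : ℕ, (n : ℝ) * p t n = μ := by
    have hgderiv : ∀ x ∈ interior (Set.Ici (0 : ℝ)),
        HasDerivAt (fun u => Real.exp u * ((∑' n : ℕ, (n : ℝ) * p u n) - μ)) 0 x := by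
      intro x hx
      rw [interior_Ici] at hx
      have hx0 : (0 : ℝ) < x := hx
      have hMcontAt : ContinuousAt (fun u => ∑' n : ℕ, (n : ℝ) * p u n) x :=
        (hMcontIcc (x + 1) (by simp only [Set.mem_Ici]; linarith)).continuousAt
          (Icc_mem_nhds (by linarith) (by linarith))
      have hhcontAt : ContinuousAt (fun u => μ - ∑' n : ℕ, (n : ℝ) * p u n) x :=
        continuousAt_const.sub hMcontAt
      have hmeas : StronglyMeasurableAtFilter (fun u => μ - ∑' n : ℕ, (n : ℝ) * p u n)
          (nhds x) MeasureTheory.volume :=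
        ⟨Set.Ioi 0, Ioi_mem_nhds hx0,
          (continuousOn_const.sub (hMcont.mono Set.Ioi_subset_Ici_self)).aestronglyMeasurable
            measurableSet_Ioi⟩
      have hInt : IntervalIntegrable (fun u => μ - ∑' n : ℕ, (n : ℝ) * p u n)
          MeasureTheory.volume 0 x := by
        apply ContinuousOn.intervalIntegrable
        rw [Set.uIcc_of_le hx0.le]
        exact continuousOn_const.sub (hMcont.mono Set.Icc_subset_Ici_self)
      have hFTC := intervalIntegral.integral_hasDerivAt_right hInt hmeas hhcontAt
      have hFTC2 := hFTC.const_add μ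
      have hMeq : (fun u => μ + ∫ s in (0 : ℝ)..u, (μ - ∑' n : ℕ, (n : ℝ) * p s n))
          =ᶠ[nhds x] (fun u => ∑' n : ℕ, (n : ℝ) * p u n) := by
        filter_upwards [Ioi_mem_nhds hx0] with u hu
        exact (hMint u (show (0:ℝ) ≤ u from le_of_lt hu)).symm
      have hM' : HasDerivAt (fun u => ∑' n : ℕ, (n : ℝ) * p u n)
          (μ - ∑' n : ℕ, (n : ℝ) * p x n) x := hFTC2.congr_of_eventuallyEq hMeq.symm
      have hexp := Real.hasDerivAt_exp x
      have hprod := hexp.fun_mul (hM'.sub_const μ)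
      have h0 : (0 : ℝ) = Real.exp x * ((∑' n : ℕ, (n : ℝ) * p x n) - μ)
          + Real.exp x * (μ - ∑' n : ℕ, (n : ℝ) * p x n) := by ring
      rw [h0]
      exact hprod
    have hgcont : ContinuousOn (fun u => Real.exp u * ((∑' n : ℕ, (n : ℝ) * p u n) - μ))
        (Set.Ici 0) := Real.continuous_exp.continuousOn.mul (hMcont.sub continuousOn_const)
    have hmono := monotoneOn_of_deriv_nonneg (convex_Ici 0) hgcont
      (fun x hx => ((hgderiv x hx).differentiableAt).differentiableWithinAt)
      (fun x hx => ((hgderiv x hx).deriv).ge)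
    have hanti := antitoneOn_of_deriv_nonpos (convex_Ici 0) hgcont
      (fun x hx => ((hgderiv x hx).differentiableAt).differentiableWithinAt)
      (fun x hx => ((hgderiv x hx).deriv).le)
    intro t ht
    have h1 := hmono Set.self_mem_Ici ht ht
    have h2 := hanti Set.self_mem_Ici ht ht
    have hg0 : Real.exp 0 * ((∑' n : ℕ, (n : ℝ) * p 0 n) - μ) = 0 := by
      rw [hM0]; simp
    have hgt : Real.exp t * ((∑' n : ℕ, (n : ℝ) * p t n) - μ) = 0 :=
      (le_antisymm h2 h1).trans hg0
    rcases mul_eq_zero.1 hgt with h | h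
    · exact absurd h (Real.exp_ne_zero t)
    · linarith
  exact fun t ht => ⟨hmass t ht, hmean t ht⟩
end

section
/- Let μ > 0 and let p ∈ V_μ satisfy 𝓛[p]_n = 0 for every n ∈ ℕ. Then p is the Poisson distribution with mean μ: p_n = μⁿ·e^{−μ}/n! for all n ∈ ℕ. In other words, the Poisson distribution with mean μ is the unique equilibrium of the poor-biased generator in V_μ. -/
/-- The Poisson distribution with mean `μ`: `p*_n = μ^n e^{-μ} / n!`. -/
noncomputable def pstar (μ : ℝ) (n : ℕ) : ℝ := μ ^ n * Real.exp (-μ) / n.factorial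

/-- The Poisson distribution with mean `μ` is the unique equilibrium of the
poor-biased generator in `V_μ`. -/
theorem poisson_unique_equilibrium (μ : ℝ) (hμ : 0 < μ) (p : ℕ → ℝ)
    (hV : memV μ p) (heq : ∀ n : ℕ, gen μ p n = 0) :
    ∀ n : ℕ, p n = pstar μ n := by
  -- Step 1: (n+1) p(n+1) = μ p n for all n
  have hrec : ∀ n : ℕ, ((n : ℝ) + 1) * p (n + 1) = μ * p n := by
    intro n
    induction n with
    | zero =>
      have h0 := heq 0
      simp only [gen] at h0
      push_cast
      linarith
    | succ k ih =>
      have h1 := heq (k + 1)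
      simp only [gen] at h1
      push_cast
      linarith
  -- Step 2: closed formula
  have hform : ∀ n : ℕ, p n = p 0 * μ ^ n / n.factorial := by
    intro n
    induction n with
    | zero => simp
    | succ k ih =>
      have h := hrec k
      have hk : ((k : ℝ) + 1) ≠ 0 := by positivity
      have hfk : (k.factorial : ℝ) ≠ 0 := by
        exact_mod_cast k.factorial_ne_zero
      have : p (k + 1) = μ * p k / ((k : ℝ) + 1) := by
        field_simp at h ⊢; linarith
      rw [this, ih]
      rw [Nat.factorial_succ]
      push_cast
      field_simp
      ring
  -- Step 3: sum to get p 0 = exp(-μ)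
  have hsum := hV.2.1
  have hexp : ∑' n : ℕ, μ ^ n / (n.factorial : ℝ) = Real.exp μ := by
    rw [Real.exp_eq_exp_ℝ, NormedSpace.exp_eq_tsum_div]
  have h1 : ∑' n : ℕ, p n = p 0 * Real.exp μ := by
    calc ∑' n : ℕ, p n = ∑' n : ℕ, p 0 * (μ ^ n / n.factorial) := by
          apply tsum_congr; intro n; rw [hform n]; ring
      _ = p 0 * ∑' n : ℕ, μ ^ n / (n.factorial : ℝ) := tsum_mul_left
      _ = p 0 * Real.exp μ := by rw [hexp]
  have hp0 : p 0 = Real.exp (-μ) := by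
    rw [hsum] at h1
    rw [Real.exp_neg]
    field_simp
    rw [h1]
  intro n
  rw [hform n, hp0, pstar]
  ring
end

section
/- Let μ > 0 and let p : [0,∞) → ℝ^ℕ be a solution of the mean-field ODE system d/dt p_n(t) = 𝓛[p(t)]_n with p(t) ∈ V_μ for all t ≥ 0. Assume that the series E[p(t) − p*] = ∑_{n≥0} (p_n(t) − p*_n)²/p*_n and the termwise-differentiated series ∑_{n≥0} 2(p_n(t) − p*_n)·𝓛[p(t)]_n/p*_n both converge uniformly on compact subsets of [0,∞). Then for every t ≥ 0, d/dt E[p(t) − p*] = −2·μ·D[p(t)], where D[p] = ∑_{n≥0} p*_n·(p_{n+1}/p*_{n+1} − p_n/p*_n)². -/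
open Filter

lemma unif_deriv_within {s : Set ℝ} (hconv : Convex ℝ s)
    {f f' : ℕ → ℝ → ℝ} {g g' : ℝ → ℝ}
    (hf : ∀ n, ∀ y ∈ s, HasDerivWithinAt (f n) (f' n y) s y)
    (hf' : TendstoUniformlyOn f' g' atTop s)
    (hfg : ∀ y ∈ s, Tendsto (fun n => f n y) atTop (nhds (g y)))
    {x : ℝ} (hx : x ∈ s) : HasDerivWithinAt g (g' x) s x := by
  rw [hasDerivWithinAt_iff_isLittleO, Asymptotics.isLittleO_iff]
  intro c hc
  have hc3 : 0 < c / 3 := by linarith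
  -- choose N
  obtain ⟨N₁, hN₁⟩ := Metric.uniformCauchySeqOn_iff.1 hf'.uniformCauchySeqOn (c/3) hc3
  have h2 : ∀ᶠ n in atTop, dist (f' n x) (g' x) < c/3 :=
    (hf'.tendsto_at hx) (Metric.ball_mem_nhds _ hc3)
  obtain ⟨N₂, hN₂⟩ := eventually_atTop.1 h2
  set N := max N₁ N₂ with hN
  -- derivative of f N at x
  have hfN := hf N x hx
  rw [hasDerivWithinAt_iff_isLittleO, Asymptotics.isLittleO_iff] at hfN
  filter_upwards [hfN hc3, self_mem_nhdsWithin] with y hy hys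
  -- MVT bound for the tail difference
  have key : ∀ m ≥ N, ‖(f m y - f N y) - (f m x - f N x)‖ ≤ c/3 * ‖y - x‖ := by
    intro m hm
    have hder : ∀ z ∈ s, HasDerivWithinAt (fun t => f m t - f N t)
        (f' m z - f' N z) s z := fun z hz => (hf m z hz).sub (hf N z hz)
    have hbound : ∀ z ∈ s, ‖f' m z - f' N z‖ ≤ c/3 := by
      intro z hz
      have := hN₁ m (le_trans (le_max_left _ _) hm) N (le_max_left _ _) z hz
      rw [dist_eq_norm] at this
      exact this.le
    exact Convex.norm_image_sub_le_of_norm_hasDerivWithin_le hder hbound hconv hx hys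
  have hA : ‖(g y - f N y) - (g x - f N x)‖ ≤ c/3 * ‖y - x‖ := by
    have hlim : Tendsto (fun m => (f m y - f N y) - (f m x - f N x)) atTop
        (nhds ((g y - f N y) - (g x - f N x))) :=
      (((hfg y hys).sub_const (f N y)).sub ((hfg x hx).sub_const (f N x)))
    have := hlim.norm
    refine le_of_tendsto this ?_
    filter_upwards [eventually_ge_atTop N] with m hm using key m hm
  have hC : ‖(y - x) • (f' N x - g' x)‖ ≤ c/3 * ‖y - x‖ := by
    rw [norm_smul]
    have : ‖f' N x - g' x‖ ≤ c/3 := by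
      have := hN₂ N (le_max_right _ _)
      rw [dist_eq_norm] at this; linarith
    calc ‖y - x‖ * ‖f' N x - g' x‖ ≤ ‖y - x‖ * (c/3) := by
          exact mul_le_mul_of_nonneg_left this (norm_nonneg _)
      _ = c/3 * ‖y - x‖ := by ring
  have decomp : g y - g x - (y - x) • g' x =
      ((g y - f N y) - (g x - f N x)) + (f N y - f N x - (y - x) • f' N x)
        + (y - x) • (f' N x - g' x) := by
    simp only [smul_eq_mul]; ring
  rw [decomp]
  calc ‖_ + _ + _‖ ≤ ‖((g y - f N y) - (g x - f N x)) + (f N y - f N x - (y - x) • f' N x)‖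
        + ‖(y - x) • (f' N x - g' x)‖ := norm_add_le _ _
    _ ≤ (‖(g y - f N y) - (g x - f N x)‖ + ‖f N y - f N x - (y - x) • f' N x‖)
        + ‖(y - x) • (f' N x - g' x)‖ := by gcongr; exact norm_add_le _ _
    _ ≤ (c/3 * ‖y - x‖ + c/3 * ‖y - x‖) + c/3 * ‖y - x‖ := by gcongr
    _ = c * ‖y - x‖ := by ring

noncomputable def Kflux (μ : ℝ) (q : ℕ → ℝ) : ℕ → ℝ
  | 0 => 0
  | n + 1 => ((n : ℝ) + 1) * q (n + 1) - μ * q n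

lemma pstar_pos {μ : ℝ} (hμ : 0 < μ) (n : ℕ) : 0 < pstar μ n := by
  unfold pstar
  positivity

lemma pstar_succ (μ : ℝ) (n : ℕ) : ((n : ℝ) + 1) * pstar μ (n + 1) = μ * pstar μ n := by
  unfold pstar
  rw [Nat.factorial_succ, pow_succ]
  push_cast
  have h1 : ((n:ℝ) + 1) ≠ 0 := by positivity
  have h2 : (n.factorial : ℝ) ≠ 0 := by positivity
  field_simp

lemma gen_eq_K (μ : ℝ) (q : ℕ → ℝ) (n : ℕ) :
    gen μ q n = Kflux μ q (n + 1) - Kflux μ q n := by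
  cases n with
  | zero => simp [gen, Kflux]
  | succ m => show gen μ q (m+1) = _; simp only [gen, Kflux]; push_cast; ring

lemma K_eq {μ : ℝ} (hμ : 0 < μ) (q : ℕ → ℝ) (n : ℕ) :
    Kflux μ q (n + 1) =
      μ * pstar μ n * (q (n + 1) / pstar μ (n + 1) - q n / pstar μ n) := by
  have h1 := (pstar_pos hμ n).ne'
  have h2 := (pstar_pos hμ (n + 1)).ne'
  have hrel := pstar_succ μ n
  show ((n : ℝ) + 1) * q (n + 1) - μ * q n = _
  have e1 : μ * pstar μ n * (q (n + 1) / pstar μ (n + 1)) = ((n : ℝ) + 1) * q (n + 1) := by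
    rw [← hrel]; field_simp
  have e2 : μ * pstar μ n * (q n / pstar μ n) = μ * q n := by field_simp
  rw [mul_sub, e1, e2]

lemma sum_ident {μ : ℝ} (hμ : 0 < μ) (q : ℕ → ℝ) (N : ℕ) :
    ∑ n ∈ Finset.range (N + 1), 2 * (q n - pstar μ n) * gen μ q n / pstar μ n =
      2 * ((q N - pstar μ N) / pstar μ N) * Kflux μ q (N + 1) -
        2 * μ * ∑ m ∈ Finset.range N,
          pstar μ m * (q (m + 1) / pstar μ (m + 1) - q m / pstar μ m) ^ 2 := by
  induction N with
  | zero =>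
      rw [zero_add, Finset.sum_range_one, Finset.range_zero, Finset.sum_empty,
        gen_eq_K μ q 0]
      rw [mul_zero, sub_zero]
      show 2 * (q 0 - pstar μ 0) * (Kflux μ q 1 - 0) / pstar μ 0 = _
      ring
  | succ N ih =>
      rw [Finset.sum_range_succ, ih, Finset.sum_range_succ (n := N),
        gen_eq_K μ q (N + 1)]
      have h1 := (pstar_pos hμ N).ne'
      have h2 := (pstar_pos hμ (N + 1)).ne'
      have hK := K_eq hμ q N
      set w := q (N + 1) / pstar μ (N + 1) - q N / pstar μ N with hw
      have hr : (q (N + 1) - pstar μ (N + 1)) / pstar μ (N + 1)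
          = w + (q N - pstar μ N) / pstar μ N := by
        rw [hw]; field_simp; ring
      linear_combination (-2 * Kflux μ q (N + 1)) * hr + (-2 * w) * hK

set_option maxHeartbeats 1000000 in
lemma partB {μ : ℝ} (hμ : 0 < μ) (q : ℕ → ℝ)
    (ha : Summable (fun n => (q n - pstar μ n) ^ 2 / pstar μ n)) {L : ℝ}
    (hu : Filter.Tendsto (fun N => ∑ n ∈ Finset.range N,
        2 * (q n - pstar μ n) * gen μ q n / pstar μ n) atTop (nhds L)) :
    L = -2 * μ * ∑' n : ℕ,
        pstar μ n * (q (n + 1) / pstar μ (n + 1) - q n / pstar μ n) ^ 2 := by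
  have hP : ∀ n, 0 < pstar μ n := pstar_pos hμ
  set a : ℕ → ℝ := fun n => (q n - pstar μ n) ^ 2 / pstar μ n with ha_def
  set d : ℕ → ℝ := fun n =>
    pstar μ n * (q (n + 1) / pstar μ (n + 1) - q n / pstar μ n) ^ 2 with hd_def
  set Dp : ℕ → ℝ := fun N => μ * ∑ m ∈ Finset.range N, d m with hDp_def
  set b : ℕ → ℝ := fun N =>
    2 * ((q N - pstar μ N) / pstar μ N) * Kflux μ q (N + 1) with hb_def
  set T : ℕ → ℝ := fun N => ∑ n ∈ Finset.range N,
    2 * (q n - pstar μ n) * gen μ q n / pstar μ n with hT_def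
  have ha0 : ∀ n, 0 ≤ a n := fun n => div_nonneg (sq_nonneg _) (hP n).le
  have hd0 : ∀ n, 0 ≤ d n := fun n => mul_nonneg (hP n).le (sq_nonneg _)
  set A : ℝ := ∑' n, a n with hA_def
  have hA : ∀ n, a n ≤ A := fun n => Summable.le_tsum ha n (fun j _ => ha0 j)
  have hA0 : 0 ≤ A := (ha0 0).trans (hA 0)
  have hax : ∀ n, a n = pstar μ n * ((q n - pstar μ n) / pstar μ n) ^ 2 := by
    intro n
    have h := (hP n).ne'
    rw [ha_def]
    field_simp
  have hident : ∀ N, T (N + 1) = b N - 2 * Dp N := by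
    intro N
    have h := sum_ident hμ q N
    simp only [hT_def, hb_def, hDp_def]
    rw [h]; ring
  have hb : ∀ N, |b N| ≤ μ * a N + μ * d N := by
    intro N
    have hK := K_eq hμ q N
    set x : ℝ := (q N - pstar μ N) / pstar μ N with hx
    set y : ℝ := q (N + 1) / pstar μ (N + 1) - q N / pstar μ N with hy
    have hbN : b N = 2 * x * (μ * pstar μ N * y) := by rw [hb_def]; simp only; rw [hK]
    have haN : a N = pstar μ N * x ^ 2 := hax N
    have hdN : d N = pstar μ N * y ^ 2 := rfl
    rw [hbN, haN, hdN, abs_le]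
    constructor <;> nlinarith [sq_nonneg (x + y), sq_nonneg (x - y), (hP N).le, hμ.le,
      mul_nonneg (mul_nonneg hμ.le (hP N).le) (sq_nonneg (x + y)),
      mul_nonneg (mul_nonneg hμ.le (hP N).le) (sq_nonneg (x - y))]
  have hdub : ∀ N : ℕ, d N ≤ 2 * ((N : ℝ) + 1) / μ * a (N + 1) + 2 * a N := by
    intro N
    have h1 := (hP N).ne'
    have h2 := (hP (N + 1)).ne'
    have hrel := pstar_succ μ N
    set r1 : ℝ := (q (N + 1) - pstar μ (N + 1)) / pstar μ (N + 1) with hr1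
    set r0 : ℝ := (q N - pstar μ N) / pstar μ N with hr0
    have hyr : q (N + 1) / pstar μ (N + 1) - q N / pstar μ N = r1 - r0 := by
      rw [hr1, hr0, sub_div, sub_div, div_self h2, div_self h1]
      ring
    have hdNe : d N = pstar μ N * (r1 - r0) ^ 2 := by rw [hd_def]; simp only; rw [hyr]
    have hrel2 : ((N : ℝ) + 1) * pstar μ (N + 1) * r1 ^ 2 = μ * pstar μ N * r1 ^ 2 := by
      linear_combination r1 ^ 2 * hrel
    have goal' : μ * d N ≤ 2 * ((N : ℝ) + 1) * a (N + 1) + 2 * μ * a N := by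
      rw [hdNe, hax (N + 1), hax N, ← hr1, ← hr0]
      nlinarith [hrel2, mul_nonneg (mul_nonneg hμ.le (hP N).le) (sq_nonneg (r1 + r0))]
    have heq : μ * (2 * ((N : ℝ) + 1) / μ * a (N + 1) + 2 * a N)
        = 2 * ((N : ℝ) + 1) * a (N + 1) + 2 * μ * a N := by
      field_simp
    have hfin : μ * d N ≤ μ * (2 * ((N : ℝ) + 1) / μ * a (N + 1) + 2 * a N) := by
      rw [heq]; exact goal'
    exact le_of_mul_le_mul_left hfin hμ
  have hmono : Monotone Dp := by
    apply monotone_nat_of_le_succ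
    intro N
    simp only [hDp_def, Finset.sum_range_succ, mul_add]
    nlinarith [hd0 N, hμ.le]
  have hbdd : BddAbove (Set.range Dp) := by
    by_contra hbd
    have htop : Filter.Tendsto Dp atTop atTop := tendsto_atTop_atTop_of_monotone' hmono hbd
    set C₀ : ℝ := max (1 - L + μ * A) 1 with hC₀
    have hC₀1 : (1 : ℝ) ≤ C₀ := le_max_right _ _
    have hev1 : ∀ᶠ N in atTop, C₀ ≤ Dp N := htop.eventually_ge_atTop C₀
    have hev2 : ∀ᶠ N in atTop, L - 1 ≤ T (N + 1) := by
      have hbase : ∀ᶠ N in atTop, L - 1 ≤ T N :=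
        Filter.Tendsto.eventually_const_le (by linarith) hu
      exact (tendsto_add_atTop_nat 1).eventually hbase
    obtain ⟨N₀, hN₀⟩ := (hev1.and hev2).exists_forall_of_atTop
    have key : ∀ N, N₀ ≤ N → 2 * Dp N ≤ Dp (N + 1) := by
      intro N hN
      have h1 := (hN₀ N hN).1
      have h2 := (hN₀ N hN).2
      have hbN := hb N
      have hi := hident N
      have hdsucc : Dp (N + 1) = Dp N + μ * d N := by
        simp only [hDp_def, Finset.sum_range_succ, mul_add]
      have haA := hA N
      have hble : b N ≤ μ * a N + μ * d N := (le_abs_self _).trans hbN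
      have hC₀ge : 1 - L + μ * A ≤ C₀ := le_max_left _ _
      nlinarith [hμ.le]
    have hgeo : ∀ k : ℕ, C₀ * 2 ^ k ≤ Dp (N₀ + k) := by
      intro k
      induction k with
      | zero => simpa using (hN₀ N₀ le_rfl).1
      | succ k ih =>
          have h2k : (1 : ℝ) ≤ 2 ^ k := one_le_pow₀ (by norm_num)
          have hkey := key (N₀ + k) (Nat.le_add_right _ _)
          have harr : N₀ + (k + 1) = (N₀ + k) + 1 := rfl
          rw [harr]
          calc C₀ * 2 ^ (k + 1) = 2 * (C₀ * 2 ^ k) := by ring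
            _ ≤ 2 * Dp (N₀ + k) := by linarith
            _ ≤ Dp ((N₀ + k) + 1) := hkey
    have hup : ∀ M : ℕ, Dp M ≤ (2 * A + 2 * μ * A) * (M : ℝ) ^ 2 := by
      intro M
      have hsum : ∑ m ∈ Finset.range M, d m ≤
          ∑ m ∈ Finset.range M, (2 * ((m : ℝ) + 1) / μ * A + 2 * A) := by
        apply Finset.sum_le_sum
        intro m _
        refine (hdub m).trans ?_
        have hle : 2 * ((m : ℝ) + 1) / μ * a (m + 1) ≤ 2 * ((m : ℝ) + 1) / μ * A :=
          mul_le_mul_of_nonneg_left (hA (m + 1)) (by positivity)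
        linarith [hA m]
      have hsum2 : ∑ m ∈ Finset.range M, (2 * ((m : ℝ) + 1) / μ * A + 2 * A) ≤
          (M : ℝ) * (2 * (M : ℝ) / μ * A + 2 * A) := by
        calc ∑ m ∈ Finset.range M, (2 * ((m : ℝ) + 1) / μ * A + 2 * A)
            ≤ ∑ _m ∈ Finset.range M, (2 * (M : ℝ) / μ * A + 2 * A) := by
              apply Finset.sum_le_sum
              intro m hm
              have hmM : (m : ℝ) + 1 ≤ (M : ℝ) := by
                exact_mod_cast Nat.succ_le_of_lt (Finset.mem_range.1 hm)
              have hfrac : 2 * ((m : ℝ) + 1) / μ * A ≤ 2 * (M : ℝ) / μ * A := by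
                rw [div_mul_eq_mul_div, div_mul_eq_mul_div, div_le_div_iff₀ hμ hμ]
                nlinarith [mul_nonneg hA0 hμ.le]
              linarith
          _ = (M : ℝ) * (2 * (M : ℝ) / μ * A + 2 * A) := by
              rw [Finset.sum_const, Finset.card_range, nsmul_eq_mul]
      have hM2 : (M : ℝ) ≤ (M : ℝ) ^ 2 := by
        rcases Nat.eq_zero_or_pos M with h | h
        · simp [h]
        · have : (1 : ℝ) ≤ (M : ℝ) := by exact_mod_cast h
          nlinarith
      have hmul := mul_le_mul_of_nonneg_left (hsum.trans hsum2) hμ.le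
      simp only [hDp_def]
      calc μ * ∑ m ∈ Finset.range M, d m
          ≤ μ * ((M : ℝ) * (2 * (M : ℝ) / μ * A + 2 * A)) := hmul
        _ = 2 * A * (M : ℝ) ^ 2 + 2 * μ * A * (M : ℝ) := by field_simp
        _ ≤ (2 * A + 2 * μ * A) * (M : ℝ) ^ 2 := by
              nlinarith [mul_le_mul_of_nonneg_left hM2
                (by nlinarith [mul_nonneg hμ.le hA0] : (0:ℝ) ≤ 2 * μ * A)]
    set B : ℝ := (2 * A + 2 * μ * A) * ((N₀ : ℝ) + 1) ^ 2 with hB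
    have hcomb : ∀ k : ℕ, C₀ * 2 ^ k ≤ B * ((k : ℝ) + 1) ^ 2 := by
      intro k
      have h1 := hgeo k
      have h2 := hup (N₀ + k)
      have h3 : ((N₀ + k : ℕ) : ℝ) ^ 2 ≤ ((N₀ : ℝ) + 1) ^ 2 * ((k : ℝ) + 1) ^ 2 := by
        push_cast
        have h5 : (N₀ : ℝ) + (k : ℝ) ≤ ((N₀ : ℝ) + 1) * ((k : ℝ) + 1) := by
          nlinarith [mul_nonneg (Nat.cast_nonneg (α := ℝ) N₀) (Nat.cast_nonneg (α := ℝ) k)]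
        have h6 := mul_le_mul h5 h5
          (by positivity) (by positivity)
        nlinarith [h6]
      have h4 : (2 * A + 2 * μ * A) * ((N₀ + k : ℕ) : ℝ) ^ 2 ≤ B * ((k : ℝ) + 1) ^ 2 := by
        have hx : (0:ℝ) ≤ 2 * A + 2 * μ * A := by nlinarith [mul_nonneg hμ.le hA0, hA0]
        have h6 := mul_le_mul_of_nonneg_left h3 hx
        rw [hB]
        nlinarith [h6]
      linarith
    have hB1 : (1 : ℝ) ≤ B := by
      have h0 := hcomb 0
      norm_num at h0
      linarith
    have htz : Filter.Tendsto (fun j : ℕ => (j : ℝ) ^ 2 * (1 / 2 : ℝ) ^ j) atTop (nhds 0) :=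
      (summable_pow_mul_geometric_of_norm_lt_one 2
        (by rw [Real.norm_eq_abs, abs_of_pos (by norm_num : (0:ℝ) < 1/2)]; norm_num :
          ‖(1/2 : ℝ)‖ < 1)).tendsto_atTop_zero
    have hlt : ∀ᶠ j : ℕ in atTop, (j : ℝ) ^ 2 * (1 / 2 : ℝ) ^ j < 1 / (9 * B) :=
      Filter.Tendsto.eventually_lt_const (by rw [one_div]; exact inv_pos.2 (by linarith)) htz
    obtain ⟨j, hjlt, hj1⟩ := (hlt.and (eventually_ge_atTop 1)).exists
    have h2j : (0 : ℝ) < 2 ^ j := by positivity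
    have hmul1 : (1 / 2 : ℝ) ^ j * 2 ^ j = 1 := by
      rw [← mul_pow]; norm_num
    have hstep : (j : ℝ) ^ 2 < 1 / (9 * B) * 2 ^ j := by
      nlinarith [mul_lt_mul_of_pos_right hjlt h2j, hmul1, sq_nonneg (j : ℝ)]
    have h9B : (0 : ℝ) < 9 * B := by linarith
    have h9 : 9 * B * (j : ℝ) ^ 2 < 2 ^ j := by
      have := mul_lt_mul_of_pos_left hstep h9B
      have heq : 9 * B * (1 / (9 * B) * 2 ^ j) = 2 ^ j := by field_simp
      linarith [heq ▸ this]
    have hj1' : (1 : ℝ) ≤ (j : ℝ) := by exact_mod_cast hj1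
    have hcombj := hcomb (j + 1)
    have hcast : (((j + 1 : ℕ) : ℝ) + 1) ^ 2 = ((j : ℝ) + 2) ^ 2 := by push_cast; ring
    rw [hcast] at hcombj
    have hsq : ((j : ℝ) + 2) ^ 2 ≤ 9 * (j : ℝ) ^ 2 := by nlinarith [hj1']
    have hq : B * ((j : ℝ) + 2) ^ 2 ≤ 9 * B * (j : ℝ) ^ 2 := by
      nlinarith [mul_le_mul_of_nonneg_left hsq (by linarith : (0:ℝ) ≤ B)]
    have hpow : C₀ * 2 ^ (j + 1) = C₀ * 2 * 2 ^ j := by ring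
    nlinarith [hcombj, hq, h9, h2j]
  -- now conclude
  obtain ⟨c, hc⟩ := hbdd
  have hcN : ∀ N, Dp N ≤ c := fun N => hc (Set.mem_range_self N)
  have hdsum : Summable d := by
    apply summable_of_sum_range_le hd0 (c := c / μ)
    intro N
    have h := hcN N
    rw [le_div_iff₀ hμ]
    simp only [hDp_def] at h
    linarith
  have hDtend : Filter.Tendsto Dp atTop (nhds (μ * ∑' n, d n)) :=
    (hdsum.hasSum.tendsto_sum_nat).const_mul μ
  have hTtend : Filter.Tendsto (fun N => T (N + 1)) atTop (nhds L) :=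
    hu.comp (tendsto_add_atTop_nat 1)
  have hbtend : Filter.Tendsto b atTop (nhds (L + 2 * (μ * ∑' n, d n))) := by
    have hfun : b = fun N => T (N + 1) + 2 * Dp N := by
      funext N
      have := hident N
      linarith
    rw [hfun]
    exact hTtend.add (hDtend.const_mul 2)
  have hgz : Filter.Tendsto (fun N => μ * a N + μ * d N) atTop (nhds 0) := by
    have h1 := ha.tendsto_atTop_zero.const_mul μ
    have h2 := hdsum.tendsto_atTop_zero.const_mul μ
    simpa using h1.add h2
  have hbzero : Filter.Tendsto b atTop (nhds 0) :=
    squeeze_zero_norm (fun N => by rw [Real.norm_eq_abs]; exact hb N) hgz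
  have hfin := tendsto_nhds_unique hbtend hbzero
  linarith

/-- Energy dissipation identity: `d/dt E[p(t) - p*] = -2 μ D[p(t)]`, where
`E[q] = ∑_n q_n² / p*_n` and `D[p] = ∑_n p*_n (p_{n+1}/p*_{n+1} - p_n/p*_n)²`. -/
theorem energy_dissipation (μ : ℝ) (hμ : 0 < μ) (p : ℝ → ℕ → ℝ)
    (hode : ∀ t ∈ Set.Ici (0 : ℝ), ∀ n : ℕ,
      HasDerivWithinAt (fun s => p s n) (gen μ (p t) n) (Set.Ici 0) t)
    (hV : ∀ t ∈ Set.Ici (0 : ℝ), memV μ (p t))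
    (hunifE : UnifConvOnCompacts (fun n t => (p t n - pstar μ n) ^ 2 / pstar μ n))
    (hunifE' : UnifConvOnCompacts
      (fun n t => 2 * (p t n - pstar μ n) * gen μ (p t) n / pstar μ n)) :
    ∀ t ∈ Set.Ici (0 : ℝ),
      HasDerivWithinAt (fun s => ∑' n : ℕ, (p s n - pstar μ n) ^ 2 / pstar μ n)
        (-2 * μ * ∑' n : ℕ, pstar μ n * (p t (n + 1) / pstar μ (n + 1) - p t n / pstar μ n) ^ 2)
        (Set.Ici 0) t := by
  intro t ht
  have ht0 : (0 : ℝ) ≤ t := ht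
  have hP : ∀ n, 0 < pstar μ n := pstar_pos hμ
  have hsing : ({t} : Set ℝ) ⊆ Set.Ici 0 := by simpa using ht0
  have hsumE := (hunifE {t} hsing isCompact_singleton).tendsto_at (Set.mem_singleton t)
  have hsumE' := (hunifE' {t} hsing isCompact_singleton).tendsto_at (Set.mem_singleton t)
  have ha0 : ∀ n, 0 ≤ (p t n - pstar μ n) ^ 2 / pstar μ n :=
    fun n => div_nonneg (sq_nonneg _) (hP n).le
  have hmn : Monotone (fun m => ∑ n ∈ Finset.range m,
      (p t n - pstar μ n) ^ 2 / pstar μ n) := fun i j hij =>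
    Finset.sum_le_sum_of_subset_of_nonneg (Finset.range_subset_range.2 hij)
      (fun k _ _ => ha0 k)
  have hsummable : Summable (fun n => (p t n - pstar μ n) ^ 2 / pstar μ n) :=
    summable_of_sum_range_le ha0 (fun m => hmn.ge_of_tendsto hsumE m)
  have hL := partB hμ (p t) hsummable hsumE'
  set s : Set ℝ := Set.Icc 0 (t + 1) with hs_def
  have hs_sub : s ⊆ Set.Ici 0 := Set.Icc_subset_Ici_self
  have hconv : Convex ℝ s := convex_Icc _ _
  have hcomp : IsCompact s := isCompact_Icc
  have hts : t ∈ s := ⟨ht0, by linarith⟩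
  have hf : ∀ m, ∀ y ∈ s, HasDerivWithinAt
      (fun u => ∑ n ∈ Finset.range m, (p u n - pstar μ n) ^ 2 / pstar μ n)
      (∑ n ∈ Finset.range m, 2 * (p y n - pstar μ n) * gen μ (p y) n / pstar μ n)
      s y := by
    intro m y hy
    apply HasDerivWithinAt.fun_sum
    intro n _
    have h := (hode y (hs_sub hy) n).mono hs_sub
    have h2 := ((h.sub_const (pstar μ n)).fun_pow 2).div_const (pstar μ n)
    exact h2.congr_deriv (by norm_num)
  have hf' := hunifE' s hs_sub hcomp
  have hfg : ∀ y ∈ s, Filter.Tendsto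
      (fun m => ∑ n ∈ Finset.range m, (p y n - pstar μ n) ^ 2 / pstar μ n) atTop
      (nhds (∑' n : ℕ, (p y n - pstar μ n) ^ 2 / pstar μ n)) :=
    fun y hy => (hunifE s hs_sub hcomp).tendsto_at hy
  have hder := unif_deriv_within hconv hf hf' hfg hts
  have hmem : s ∈ nhdsWithin t (Set.Ici 0) := by
    rw [hs_def, ← Set.Ici_inter_Iic]
    exact inter_mem_nhdsWithin _ (Iic_mem_nhds (by linarith))
  have hder2 := hder.mono_of_mem_nhdsWithin hmem
  rw [← hL]
  exact hder2
end

section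
/- Fix integers N ≥ 2 and μ ≥ 1. The multinomial distribution M_N is a stationary distribution of the poor-biased master equation: for every S ∈ 𝒜_{N,μ}, ∑_{i≠j} [((S_i+1)/N)·M_N(S + e_i − e_j)·1_{S_j ≥ 1} − (S_i/N)·M_N(S)] = 0, where e_i is the i-th standard basis vector of ℕ^N. -/
open MeasureTheory ENNReal

noncomputable section

/-- The configuration obtained from `S` by adding a dollar to agent `i` and removing
one from agent `j`, i.e. `S + e_i - e_j`. -/
def moveDollar {N : ℕ} (S : Fin N → ℕ) (i j : Fin N) : Fin N → ℕ :=
  Function.update (Function.update S i (S i + 1)) j (S j - 1)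

/-- The right-hand side of the poor-biased master equation at configuration `S`:
`∑_{i ≠ j} [((S_i+1)/N) P(S + e_i - e_j) 1_{S_j ≥ 1} - (S_i/N) P(S)]`. -/
def masterRHS {N : ℕ} (P : Measure (Fin N → ℕ)) (S : Fin N → ℕ) : ℝ :=
  ∑ i : Fin N, ∑ j : Fin N,
    if i ≠ j then
      (((S i : ℝ) + 1) / N) * (P {moveDollar S i j}).toReal * (if 1 ≤ S j then 1 else 0)
        - ((S i : ℝ) / N) * (P {S}).toReal
    else 0

/-- A solution of the poor-biased master equation on `[0, ∞)`: a family of probability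
measures on `ℕ^N` whose point masses are differentiable in time with derivative given
by the master equation. -/
def IsMasterSolution {N : ℕ} (P : ℝ → Measure (Fin N → ℕ)) : Prop :=
  (∀ t ∈ Set.Ici (0 : ℝ), IsProbabilityMeasure (P t)) ∧
    ∀ S : Fin N → ℕ, ∀ t ∈ Set.Ici (0 : ℝ),
      HasDerivWithinAt (fun s => ((P s) {S}).toReal) (masterRHS (P t) S) (Set.Ici 0) t

/-- The multinomial distribution `M_N` on `𝒜_{N,μ}` (extended by `0` to `ℕ^N`):
`M_N(S) = ((Nμ)! / (S_1! ⋯ S_N!)) N^{-Nμ}` when `∑_i S_i = Nμ`. -/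
def MNmeas (N μ : ℕ) : Measure (Fin N → ℕ) :=
  Measure.sum (fun S : Fin N → ℕ =>
    (if ∑ i, S i = N * μ then
        ENNReal.ofReal (((N * μ).factorial : ℝ) / ((∏ i, (S i).factorial : ℕ) * (N : ℝ) ^ (N * μ)))
      else 0) • Measure.dirac S)

def wgt (N μ : ℕ) (S : Fin N → ℕ) : ℝ :=
  if ∑ i, S i = N * μ then
    ((N * μ).factorial : ℝ) / ((∏ i, (S i).factorial : ℕ) * (N : ℝ) ^ (N * μ))
  else 0

lemma MNmeas_toReal (N μ : ℕ) (S : Fin N → ℕ) :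
    ((MNmeas N μ) {S}).toReal = wgt N μ S := by
  have h : (MNmeas N μ) {S} =
      (if ∑ i, S i = N * μ then
        ENNReal.ofReal (((N * μ).factorial : ℝ) / ((∏ i, (S i).factorial : ℕ) * (N : ℝ) ^ (N * μ)))
      else 0) := by
    rw [MNmeas, Measure.sum_apply _ (measurableSet_singleton S),
      tsum_eq_single S (fun T hT => by
        split <;> simp [Measure.smul_apply, Measure.dirac_apply, hT])]
    split <;> simp [Measure.smul_apply, Measure.dirac_apply]
  rw [h, wgt]
  split
  · rw [ENNReal.toReal_ofReal (by positivity)]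
  · simp

lemma sum_moveDollar {N : ℕ} (S : Fin N → ℕ) (i j : Fin N) (hij : i ≠ j) (hj : 1 ≤ S j) :
    ∑ k, moveDollar S i j k = ∑ k, S k := by
  have hi : i ∈ Finset.univ.erase j := Finset.mem_erase.2 ⟨hij, Finset.mem_univ i⟩
  unfold moveDollar
  rw [Finset.sum_update_of_mem (Finset.mem_univ j)]
  simp only [← Finset.erase_eq]
  rw [Finset.sum_update_of_mem hi]
  simp only [← Finset.erase_eq]
  rw [← Finset.add_sum_erase _ S (Finset.mem_univ j), ← Finset.add_sum_erase _ S hi]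
  omega

lemma prod_moveDollar {N : ℕ} (S : Fin N → ℕ) (i j : Fin N) (hij : i ≠ j) (hj : 1 ≤ S j) :
    S j * ∏ k, (moveDollar S i j k).factorial = (S i + 1) * ∏ k, (S k).factorial := by
  have hi : i ∈ Finset.univ.erase j := Finset.mem_erase.2 ⟨hij, Finset.mem_univ i⟩
  have h1 : ∀ k, (moveDollar S i j k).factorial =
      Function.update (fun k => ((Function.update S i (S i + 1)) k).factorial) j
        ((S j - 1).factorial) k := fun k =>
    by unfold moveDollar; exact Function.apply_update (fun _ (n : ℕ) => Nat.factorial n) _ j _ k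
  have h2 : ∀ k, ((Function.update S i (S i + 1)) k).factorial =
      Function.update (fun k => (S k).factorial) i ((S i + 1).factorial) k := fun k =>
    Function.apply_update (fun _ (n : ℕ) => Nat.factorial n) _ i _ k
  calc S j * ∏ k, (moveDollar S i j k).factorial
      = S j * ((S j - 1).factorial * ∏ k ∈ Finset.univ.erase j,
          ((Function.update S i (S i + 1)) k).factorial) := by
        rw [Finset.prod_congr rfl (fun k _ => h1 k),
          Finset.prod_update_of_mem (Finset.mem_univ j)]
        simp only [← Finset.erase_eq]
    _ = S j * ((S j - 1).factorial * ((S i + 1).factorial *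
          ∏ k ∈ (Finset.univ.erase j).erase i, (S k).factorial)) := by
        rw [Finset.prod_congr rfl (fun k _ => h2 k), Finset.prod_update_of_mem hi]
        simp only [← Finset.erase_eq]
    _ = (S i + 1) * ∏ k, (S k).factorial := by
        rw [← Finset.mul_prod_erase _ _ (Finset.mem_univ j), ← Finset.mul_prod_erase _ _ hi,
          Nat.factorial_succ, ← Nat.mul_factorial_pred (Nat.one_le_iff_ne_zero.mp hj)]
        ring

lemma wgt_move (N μ : ℕ) (hN : 0 < N) (S : Fin N → ℕ) (hS : ∑ k, S k = N * μ)
    (i j : Fin N) (hij : i ≠ j) (hj : 1 ≤ S j) :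
    ((S i : ℝ) + 1) * wgt N μ (moveDollar S i j) = (S j : ℝ) * wgt N μ S := by
  have hsum : ∑ k, moveDollar S i j k = N * μ := by rw [sum_moveDollar S i j hij hj, hS]
  rw [wgt, wgt, if_pos hsum, if_pos hS]
  have hP : (0 : ℝ) < (∏ k, (S k).factorial : ℕ) := by positivity
  have hP' : (0 : ℝ) < (∏ k, (moveDollar S i j k).factorial : ℕ) := by positivity
  have hn : (0 : ℝ) < (N : ℝ) ^ (N * μ) := by positivity
  have hkey : (S j : ℝ) * ∏ k, ((moveDollar S i j k).factorial : ℝ) =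
      ((S i : ℝ) + 1) * ∏ k, ((S k).factorial : ℝ) := by
    exact_mod_cast congrArg (fun n : ℕ => (n : ℝ)) (prod_moveDollar S i j hij hj)
  push_cast at hP hP' ⊢
  rw [mul_div_assoc', mul_div_assoc', div_eq_div_iff (by positivity) (by positivity)]
  linear_combination (-(((N * μ).factorial : ℝ) * (N : ℝ) ^ (N * μ))) * hkey

/-- The multinomial distribution `M_N` is stationary for the poor-biased master equation. -/
theorem multinomial_stationary (N μ : ℕ) (hN : 2 ≤ N) (hμ : 1 ≤ μ) :
    ∀ S : Fin N → ℕ, ∑ i, S i = N * μ → masterRHS (MNmeas N μ) S = 0 := by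
  intro S hS
  have hN0 : 0 < N := by omega
  have hterm : ∀ i j : Fin N, i ≠ j →
      ((((S i : ℝ) + 1) / N) * ((MNmeas N μ) {moveDollar S i j}).toReal *
          (if 1 ≤ S j then (1:ℝ) else 0)
        - ((S i : ℝ) / N) * ((MNmeas N μ) {S}).toReal)
      = ((S j : ℝ) - S i) / N * wgt N μ S := by
    intro i j hij
    rw [MNmeas_toReal, MNmeas_toReal]
    by_cases hj : 1 ≤ S j
    · rw [if_pos hj, mul_one, div_mul_eq_mul_div, wgt_move N μ hN0 S hS i j hij hj]
      ring
    · have hj0 : S j = 0 := by omega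
      rw [if_neg hj, mul_zero, hj0]
      push_cast
      ring
  have key2 : masterRHS (MNmeas N μ) S =
      ∑ i : Fin N, ∑ j : Fin N,
        (if i ≠ j then ((S j : ℝ) - S i) / N * wgt N μ S else 0) := by
    rw [masterRHS]
    refine Finset.sum_congr rfl fun i _ => Finset.sum_congr rfl fun j _ => ?_
    by_cases h : i ≠ j
    · rw [if_pos h, if_pos h, hterm i j h]
    · rw [if_neg h, if_neg h]
  rw [key2]
  set g : Fin N → Fin N → ℝ :=
    fun i j => if i ≠ j then ((S j : ℝ) - S i) / N * wgt N μ S else 0 with hg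
  have hanti : ∀ i j, g i j = -(g j i) := by
    intro i j
    by_cases h : i = j
    · simp [hg, h]
    · rw [hg]
      simp only [h, Ne.symm h, ne_eq, not_false_eq_true, if_true, not_true]
      ring
  have : (∑ i : Fin N, ∑ j : Fin N, g i j) = -(∑ i : Fin N, ∑ j : Fin N, g i j) := by
    nth_rewrite 1 [Finset.sum_comm]
    calc ∑ j : Fin N, ∑ i : Fin N, g i j
        = ∑ j : Fin N, ∑ i : Fin N, -(g j i) := by
          exact Finset.sum_congr rfl fun j _ => Finset.sum_congr rfl fun i _ => hanti i j
      _ = -(∑ j : Fin N, ∑ i : Fin N, g j i) := by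
          simp [Finset.sum_neg_distrib]
  linarith

end
end

section
/- Fix integers N ≥ 2 and μ ≥ 1. Let P : [0,∞) → probability measures on ℕ^N be a solution of the poor-biased master equation whose initial condition P_0 is supported on 𝒜_{N,μ}. Then for every t ≥ 0, W₁(P_t, M_N) ≤ 2·μ·e^{−t}, where W₁ is the normalized Wasserstein-1 distance on ℕ^N. -/
open MeasureTheory ENNReal

noncomputable section

/-- The normalized Wasserstein-1 distance (valued in `ℝ≥0∞`) between two measures on
`ℕ^d`: the infimum over couplings of the expected normalized `ℓ¹` distance. -/
def W1 (d : ℕ) (π₁ π₂ : Measure (Fin d → ℕ)) : ℝ≥0∞ :=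
  ⨅ (π : Measure ((Fin d → ℕ) × (Fin d → ℕ))) (_ : π.map Prod.fst = π₁)
      (_ : π.map Prod.snd = π₂),
    ∫⁻ z, (∑ j : Fin d, (Nat.dist (z.1 j) (z.2 j) : ℝ≥0∞)) / (d : ℝ≥0∞) ∂π

namespace PoorBiased

variable {N M : ℕ}

/-- counts of a dollar configuration -/
def cnt {M N : ℕ} (d : Fin M → Fin N) : Fin N → ℕ :=
  fun i => (Finset.univ.filter fun k => d k = i).card

lemma cnt_sum (d : Fin M → Fin N) : ∑ i, cnt d i = M := by
  have h := Finset.card_eq_sum_card_fiberwise (s := (Finset.univ : Finset (Fin M)))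
    (t := Finset.univ) (f := d) (fun x _ => Finset.mem_univ (d x))
  simp only [Finset.card_univ, Fintype.card_fin] at h
  simpa [cnt] using h.symm

lemma cnt_eq_card_subtype (d : Fin M → Fin N) (i : Fin N) :
    cnt d i = Fintype.card {k // d k = i} := by
  rw [Fintype.card_subtype]; rfl

def sigmaFstFiber {N : ℕ} (T : Fin N → ℕ) (i : Fin N) :
    {x : Σ j, Fin (T j) // x.1 = i} ≃ Fin (T i) where
  toFun x := x.2 ▸ x.1.2
  invFun v := ⟨⟨i, v⟩, rfl⟩
  left_inv := by rintro ⟨⟨j, v⟩, rfl⟩; rfl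
  right_inv v := rfl

lemma exists_cnt_eq (T : Fin N → ℕ) (hT : ∑ i, T i = M) :
    ∃ σ : Fin M → Fin N, cnt σ = T := by
  have hc : Fintype.card (Σ i, Fin (T i)) = Fintype.card (Fin M) := by
    simp [hT]
  have e := Fintype.equivOfCardEq hc
  refine ⟨fun k => (e.symm k).1, ?_⟩
  funext i
  rw [cnt_eq_card_subtype,
    Fintype.card_congr ((Equiv.subtypeEquiv e.symm (fun k => Iff.rfl)).trans (sigmaFstFiber T i))]
  exact Fintype.card_fin _

lemma cnt_comp_perm (σ : Fin M → Fin N) (g : Equiv.Perm (Fin M)) :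
    cnt (σ ∘ g) = cnt σ := by
  funext i
  rw [cnt_eq_card_subtype, cnt_eq_card_subtype]
  exact Fintype.card_congr (Equiv.subtypeEquiv g (fun k => Iff.rfl))

lemma exists_perm_comp (σ d : Fin M → Fin N) (h : cnt d = cnt σ) :
    ∃ g : Equiv.Perm (Fin M), σ ∘ ⇑g = d := by
  have hce : ∀ i, Fintype.card {k // d k = i} = Fintype.card {k // σ k = i} := by
    intro i; rw [← cnt_eq_card_subtype, ← cnt_eq_card_subtype, h]
  have e : ∀ i, {k // d k = i} ≃ {k // σ k = i} := fun i => Fintype.equivOfCardEq (hce i)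
  refine ⟨(Equiv.sigmaFiberEquiv d).symm.trans
    ((Equiv.sigmaCongrRight e).trans (Equiv.sigmaFiberEquiv σ)), ?_⟩
  funext k
  have : (Equiv.sigmaFiberEquiv d).symm k = ⟨d k, ⟨k, rfl⟩⟩ := rfl
  simp only [Function.comp_apply, Equiv.trans_apply, this, Equiv.sigmaCongrRight_apply]
  exact (e (d k) ⟨k, rfl⟩).2

lemma card_fiber_perm (σ d : Fin M → Fin N) (h : cnt d = cnt σ) :
    (Finset.univ.filter fun g : Equiv.Perm (Fin M) => σ ∘ ⇑g = d).card
      = ∏ i, (cnt σ i).factorial := by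
  obtain ⟨g₀, hg₀⟩ := exists_perm_comp σ d h
  have E : {g : Equiv.Perm (Fin M) // σ ∘ ⇑g = d} ≃ {g : Equiv.Perm (Fin M) // σ ∘ ⇑g = σ} := by
    have hg₀' : ∀ y, σ (g₀ y) = d y := fun y => congrFun hg₀ y
    refine Equiv.subtypeEquiv
      (Equiv.mk (fun g => g₀.symm.trans g) (fun h => g₀.trans h)
        (fun g => by ext x; simp) (fun g => by ext x; simp)) (fun g => ?_)
    constructor
    · intro hg
      have hg' : ∀ y, σ (g y) = d y := fun y => congrFun hg y
      funext x
      show σ (g (g₀.symm x)) = σ x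
      rw [hg' (g₀.symm x), ← hg₀' (g₀.symm x), Equiv.apply_symm_apply]
    · intro hg
      have hq : ∀ y, σ (g (g₀.symm y)) = σ y := fun y => congrFun hg y
      funext x
      show σ (g x) = d x
      calc σ (g x) = σ (g (g₀.symm (g₀ x))) := by rw [Equiv.symm_apply_apply]
        _ = σ (g₀ x) := hq (g₀ x)
        _ = d x := hg₀' x
  have h1 : (Finset.univ.filter fun g : Equiv.Perm (Fin M) => σ ∘ ⇑g = d).card
      = Fintype.card {g : Equiv.Perm (Fin M) // σ ∘ ⇑g = d} := by
    rw [Fintype.card_subtype]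
  rw [h1, Fintype.card_congr E, DomMulAct.stabilizer_card]
  exact Finset.prod_congr rfl (fun i _ => by rw [← cnt_eq_card_subtype])

lemma card_cnt_eq_mul_factorial (T : Fin N → ℕ) (hT : ∑ i, T i = M) :
    (Finset.univ.filter fun d : Fin M → Fin N => cnt d = T).card * ∏ i, (T i).factorial
      = M.factorial := by
  obtain ⟨σ, hσ⟩ := exists_cnt_eq T hT
  subst hσ
  have h1 : (Finset.univ : Finset (Equiv.Perm (Fin M))).card = M.factorial := by
    rw [Finset.card_univ, Fintype.card_perm, Fintype.card_fin]
  calc (Finset.univ.filter fun d : Fin M → Fin N => cnt d = cnt σ).card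
        * ∏ i, (cnt σ i).factorial
      = ∑ d ∈ Finset.univ.filter fun d : Fin M → Fin N => cnt d = cnt σ,
          (Finset.univ.filter fun g : Equiv.Perm (Fin M) => σ ∘ ⇑g = d).card := by
        rw [Finset.sum_congr rfl (fun d hd => card_fiber_perm σ d (by simpa using hd)),
          Finset.sum_const, smul_eq_mul]
    _ = (Finset.univ : Finset (Equiv.Perm (Fin M))).card :=
        (Finset.card_eq_sum_card_fiberwise (fun g _ => by simp [cnt_comp_perm])).symm
    _ = M.factorial := h1


/-! ### Level sets and the linear vector field -/

def lev (N m : ℕ) : Finset (Fin N → ℕ) := Finset.piAntidiag Finset.univ m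

lemma mem_lev {m : ℕ} {S : Fin N → ℕ} : S ∈ lev N m ↔ ∑ i, S i = m := by
  simp [lev]

lemma moveDollar_mem_lev {m : ℕ} {S : Fin N → ℕ} (hS : S ∈ lev N m) {i j : Fin N}
    (hij : i ≠ j) (hj : 1 ≤ S j) : moveDollar S i j ∈ lev N m := by
  rw [mem_lev] at hS ⊢
  have hi' : i ∈ Finset.univ \ {j} := by simp [hij]
  have h1 : ∑ x ∈ Finset.univ, S x = S j + ∑ x ∈ Finset.univ \ {j}, S x :=
    Finset.sum_eq_add_sum_sdiff_singleton_of_mem (Finset.mem_univ j) S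
  have h2 : ∑ x ∈ Finset.univ \ {j}, S x = S i + ∑ x ∈ (Finset.univ \ {j}) \ {i}, S x :=
    Finset.sum_eq_add_sum_sdiff_singleton_of_mem hi' S
  unfold moveDollar
  rw [Finset.sum_update_of_mem (Finset.mem_univ j), Finset.sum_update_of_mem hi']
  omega

def vfFun (N m : ℕ) (x : {S // S ∈ lev N m} → ℝ) : {S // S ∈ lev N m} → ℝ :=
  fun S => ∑ i, ∑ j, if hij : i ≠ j then
      ((if hj : 1 ≤ (S : Fin N → ℕ) j then
          (((S : Fin N → ℕ) i : ℝ) + 1) / N * x ⟨moveDollar S i j, moveDollar_mem_lev S.2 hij hj⟩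
        else 0)
        - ((S : Fin N → ℕ) i : ℝ) / N * x S)
    else 0

def vfLin (N m : ℕ) : ({S // S ∈ lev N m} → ℝ) →ₗ[ℝ] ({S // S ∈ lev N m} → ℝ) where
  toFun := vfFun N m
  map_add' x y := by
    funext S
    show vfFun N m (x + y) S = vfFun N m x S + vfFun N m y S
    unfold vfFun
    rw [← Finset.sum_add_distrib]
    refine Finset.sum_congr rfl fun i _ => ?_
    rw [← Finset.sum_add_distrib]
    refine Finset.sum_congr rfl fun j _ => ?_
    split_ifs <;> simp <;> ring
  map_smul' c x := by
    funext S
    show vfFun N m (c • x) S = c * vfFun N m x S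
    unfold vfFun
    rw [Finset.mul_sum]
    refine Finset.sum_congr rfl fun i _ => ?_
    rw [Finset.mul_sum]
    refine Finset.sum_congr rfl fun j _ => ?_
    split_ifs <;> simp <;> ring

lemma masterRHS_eq (Q : Measure (Fin N → ℕ)) {m : ℕ} (S : Fin N → ℕ) (hS : S ∈ lev N m) :
    masterRHS Q S = vfFun N m (fun T => (Q {(T : Fin N → ℕ)}).toReal) ⟨S, hS⟩ := by
  unfold masterRHS vfFun
  refine Finset.sum_congr rfl fun i _ => Finset.sum_congr rfl fun j _ => ?_
  split_ifs with hij hj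
  · simp
  · simp
  · rfl

lemma level_unique {m : ℕ} (x y : ℝ → ({S // S ∈ lev N m} → ℝ))
    (hx : ∀ t ∈ Set.Ici (0:ℝ), HasDerivWithinAt x (vfFun N m (x t)) (Set.Ici 0) t)
    (hy : ∀ t ∈ Set.Ici (0:ℝ), HasDerivWithinAt y (vfFun N m (y t)) (Set.Ici 0) t)
    (h0 : x 0 = y 0) : ∀ t ∈ Set.Ici (0:ℝ), x t = y t := by
  intro t ht
  rw [Set.mem_Ici] at ht
  set A := LinearMap.toContinuousLinearMap (vfLin N m) with hAdef
  have hlip : ∀ s : ℝ, LipschitzOnWith ‖A‖₊ (fun z => vfFun N m z) Set.univ := by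
    intro s
    have h := A.lipschitz.lipschitzOnWith (s := (Set.univ : Set ({S // S ∈ lev N m} → ℝ)))
    exact h
  have key := ODE_solution_unique_of_mem_Icc_right (v := fun _ z => vfFun N m z)
    (s := fun _ => Set.univ) (K := ‖A‖₊) (a := 0) (b := t) (f := x) (g := y) (fun s _ => hlip s)
    (fun τ hτ => (hx τ hτ.1).continuousWithinAt.mono Set.Icc_subset_Ici_self)
    (fun τ hτ => (hx τ hτ.1).mono (Set.Ici_subset_Ici.mpr hτ.1))
    (fun _ _ => trivial)
    (fun τ hτ => (hy τ hτ.1).continuousWithinAt.mono Set.Icc_subset_Ici_self)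
    (fun τ hτ => (hy τ hτ.1).mono (Set.Ici_subset_Ici.mpr hτ.1))
    (fun _ _ => trivial) h0
  exact key (Set.right_mem_Icc.mpr ht)

/-! ### The single-dollar kernel `wfn` and product solution `Qfn` -/

def wfn (N : ℕ) (t : ℝ) (a b : Fin N) : ℝ :=
  Real.exp (-t) * (if a = b then 1 else 0) + (1 - Real.exp (-t)) / N

lemma exp_neg_le_one {t : ℝ} (ht : 0 ≤ t) : Real.exp (-t) ≤ 1 := by
  calc Real.exp (-t) ≤ Real.exp 0 := Real.exp_le_exp.mpr (by linarith)
    _ = 1 := Real.exp_zero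

lemma wfn_nonneg {t : ℝ} (ht : 0 ≤ t) (a b : Fin N) : 0 ≤ wfn N t a b := by
  unfold wfn
  have h1 := exp_neg_le_one ht
  have h2 : (0:ℝ) ≤ (1 - Real.exp (-t)) / N :=
    div_nonneg (by linarith) (Nat.cast_nonneg N)
  have h3 : (0:ℝ) ≤ Real.exp (-t) * (if a = b then 1 else 0) := by
    split_ifs <;> simp [(Real.exp_pos _).le]
  linarith

lemma sum_wfn (hN : 0 < N) (t : ℝ) (a : Fin N) : ∑ b, wfn N t a b = 1 := by
  unfold wfn
  have hN' : (N:ℝ) ≠ 0 := Nat.cast_ne_zero.mpr hN.ne'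
  rw [Finset.sum_add_distrib, ← Finset.mul_sum,
    Finset.sum_ite_eq Finset.univ a (fun _ => (1:ℝ)), if_pos (Finset.mem_univ a),
    Finset.sum_const, Finset.card_univ, Fintype.card_fin, nsmul_eq_mul]
  field_simp
  ring

lemma wfn_zero (a b : Fin N) : wfn N 0 a b = if a = b then 1 else 0 := by
  simp [wfn, Real.exp_zero]

lemma hasDerivAt_wfn (a b : Fin N) (t : ℝ) :
    HasDerivAt (fun s => wfn N s a b) (1 / N - wfn N t a b) t := by
  have h1 : HasDerivAt (fun s : ℝ => Real.exp (-s)) (-Real.exp (-t)) t := by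
    exact ((Real.hasDerivAt_exp (-t)).comp t (hasDerivAt_neg t)).congr_deriv (by ring)
  have h2 := (h1.mul_const (if a = b then (1:ℝ) else 0)).add
    ((h1.const_sub 1).div_const (N:ℝ))
  refine h2.congr_deriv ?_
  unfold wfn; ring

def Ffn (N M : ℕ) (t : ℝ) (σ d : Fin M → Fin N) : ℝ := ∏ k, wfn N t (σ k) (d k)

def DT (N M : ℕ) (T : Fin N → ℕ) : Finset (Fin M → Fin N) :=
  Finset.univ.filter fun d => cnt d = T

def Qfn (N M : ℕ) (t : ℝ) (σ : Fin M → Fin N) (T : Fin N → ℕ) : ℝ :=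
  ∑ d ∈ DT N M T, Ffn N M t σ d

lemma Ffn_nonneg {t : ℝ} (ht : 0 ≤ t) (σ d : Fin M → Fin N) : 0 ≤ Ffn N M t σ d :=
  Finset.prod_nonneg fun k _ => wfn_nonneg ht _ _

lemma Qfn_nonneg {t : ℝ} (ht : 0 ≤ t) (σ : Fin M → Fin N) (T : Fin N → ℕ) :
    0 ≤ Qfn N M t σ T :=
  Finset.sum_nonneg fun d _ => Ffn_nonneg ht σ d

lemma Ffn_zero (σ d : Fin M → Fin N) : Ffn N M 0 σ d = if σ = d then 1 else 0 := by
  by_cases h : σ = d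
  · subst h; simp [Ffn, wfn_zero]
  · rw [if_neg h]
    obtain ⟨k, hk⟩ : ∃ k, σ k ≠ d k := by
      by_contra hc; push_neg at hc; exact h (funext hc)
    unfold Ffn
    exact Finset.prod_eq_zero (Finset.mem_univ k) (by simp [wfn_zero, hk])

lemma Qfn_zero (σ : Fin M → Fin N) (T : Fin N → ℕ) :
    Qfn N M 0 σ T = if cnt σ = T then 1 else 0 := by
  unfold Qfn
  rw [Finset.sum_congr rfl (fun d _ => Ffn_zero σ d),
    Finset.sum_ite_eq (DT N M T) σ (fun _ => (1:ℝ))]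
  simp [DT]

/-! ### Count update lemmas -/

lemma cnt_update {d : Fin M → Fin N} {k : Fin M} {i j : Fin N} (hk : d k = j) (hij : i ≠ j) :
    cnt (Function.update d k i) = moveDollar (cnt d) i j := by
  have hji : j ≠ i := hij.symm
  funext l
  unfold moveDollar
  rw [Function.update_apply, Function.update_apply]
  by_cases hl : l = j
  · rw [if_pos hl, hl]
    show cnt (Function.update d k i) j = cnt d j - 1
    unfold cnt
    have hfe : (Finset.univ.filter fun k' => Function.update d k i k' = j)
        = (Finset.univ.filter fun k' => d k' = j).erase k := by
      ext k'
      simp only [Finset.mem_filter, Finset.mem_erase, Finset.mem_univ, true_and,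
        Function.update_apply]
      by_cases hk' : k' = k
      · simp [hk', hij]
      · simp [hk']
    rw [hfe, Finset.card_erase_of_mem (by simp [hk])]
  · rw [if_neg hl]
    by_cases hli : l = i
    · rw [if_pos hli, hli]
      show cnt (Function.update d k i) i = cnt d i + 1
      unfold cnt
      have hfe : (Finset.univ.filter fun k' => Function.update d k i k' = i)
          = insert k (Finset.univ.filter fun k' => d k' = i) := by
        ext k'
        simp only [Finset.mem_filter, Finset.mem_insert, Finset.mem_univ, true_and,
          Function.update_apply]
        by_cases hk' : k' = k
        · simp [hk']
        · simp [hk']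
      rw [hfe, Finset.card_insert_of_notMem (by simp [hk, hji])]
    · rw [if_neg hli]
      unfold cnt
      congr 1
      ext k'
      simp only [Finset.mem_filter, Finset.mem_univ, true_and, Function.update_apply]
      by_cases hk' : k' = k
      · subst hk'
        simp only [if_pos rfl]
        exact iff_of_false (fun h => hli h.symm) (fun h => hl ((hk.symm.trans h).symm))
      · simp [hk']

lemma moveDollar_moveDollar {T : Fin N → ℕ} {i j : Fin N} (hij : i ≠ j) (hj : 1 ≤ T j) :
    moveDollar (moveDollar T i j) j i = T := by
  funext l
  unfold moveDollar
  simp only [Function.update_apply]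
  split_ifs <;> simp_all <;> omega

/-! ### Derivative of `Qfn` -/

lemma hasDerivAt_Ffn (t : ℝ) (σ d : Fin M → Fin N) :
    HasDerivAt (fun s => Ffn N M s σ d)
      (∑ k, (∏ l ∈ Finset.univ.erase k, wfn N t (σ l) (d l))
        * (1 / N - wfn N t (σ k) (d k))) t := by
  have h := HasDerivAt.fun_finsetProd (u := Finset.univ)
    (f := fun k s => wfn N s (σ k) (d k)) (f' := fun k => 1 / N - wfn N t (σ k) (d k))
    (fun k _ => hasDerivAt_wfn _ _ t)
  exact h.congr_deriv (by simp [smul_eq_mul])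

lemma Ffn_update (t : ℝ) (σ d : Fin M → Fin N) (k : Fin M) (b : Fin N) :
    Ffn N M t σ (Function.update d k b)
      = wfn N t (σ k) b * ∏ l ∈ Finset.univ.erase k, wfn N t (σ l) (d l) := by
  unfold Ffn
  rw [← Finset.mul_prod_erase Finset.univ
    (fun l => wfn N t (σ l) (Function.update d k b l)) (Finset.mem_univ k)]
  congr 1
  · rw [Function.update_self]
  · exact Finset.prod_congr rfl fun l hl => by
      rw [Function.update_of_ne (Finset.mem_erase.mp hl).1]

lemma deriv_Ffn_eq (hN : 0 < N) (t : ℝ) (σ d : Fin M → Fin N) :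
    ∑ k, (∏ l ∈ Finset.univ.erase k, wfn N t (σ l) (d l)) * (1 / N - wfn N t (σ k) (d k))
      = (1 / N) * (∑ k, ∑ b ∈ Finset.univ.erase (d k), Ffn N M t σ (Function.update d k b))
        - ((M : ℝ) * ((N : ℝ) - 1) / N) * Ffn N M t σ d := by
  have key : ∀ k, (∏ l ∈ Finset.univ.erase k, wfn N t (σ l) (d l))
        * (1 / N - wfn N t (σ k) (d k))
      = (1/(N:ℝ)) * ((∑ b ∈ Finset.univ.erase (d k), Ffn N M t σ (Function.update d k b))
          + Ffn N M t σ d) - Ffn N M t σ d := by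
    intro k
    have h2 : (∑ b, Ffn N M t σ (Function.update d k b))
        = ∏ l ∈ Finset.univ.erase k, wfn N t (σ l) (d l) := by
      rw [Finset.sum_congr rfl (fun b _ => Ffn_update t σ d k b), ← Finset.sum_mul,
        sum_wfn hN, one_mul]
    have hP : (∏ l ∈ Finset.univ.erase k, wfn N t (σ l) (d l))
        = (∑ b ∈ Finset.univ.erase (d k), Ffn N M t σ (Function.update d k b))
          + Ffn N M t σ d := by
      rw [← h2, ← Finset.sum_erase_add Finset.univ _ (Finset.mem_univ (d k))]
      congr 1
      rw [Function.update_eq_self]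
    have hw : (∏ l ∈ Finset.univ.erase k, wfn N t (σ l) (d l)) * wfn N t (σ k) (d k)
        = Ffn N M t σ d := by
      unfold Ffn
      rw [mul_comm]
      exact Finset.mul_prod_erase Finset.univ (fun l => wfn N t (σ l) (d l)) (Finset.mem_univ k)
    rw [mul_sub, hw, hP]
    ring
  calc ∑ k, (∏ l ∈ Finset.univ.erase k, wfn N t (σ l) (d l))
        * (1 / N - wfn N t (σ k) (d k))
      = ∑ k : Fin M, ((1/(N:ℝ)) * ((∑ b ∈ Finset.univ.erase (d k),
            Ffn N M t σ (Function.update d k b)) + Ffn N M t σ d) - Ffn N M t σ d) :=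
        Finset.sum_congr rfl fun k _ => key k
    _ = (1 / N) * (∑ k, ∑ b ∈ Finset.univ.erase (d k), Ffn N M t σ (Function.update d k b))
        - ((M : ℝ) * ((N : ℝ) - 1) / N) * Ffn N M t σ d := by
        simp only [Finset.sum_sub_distrib, Finset.sum_add_distrib, ← Finset.mul_sum,
          Finset.sum_const, Finset.card_univ, Fintype.card_fin, nsmul_eq_mul]
        have hN' : (N:ℝ) ≠ 0 := Nat.cast_ne_zero.mpr hN.ne'
        field_simp
        ring

lemma inflow (t : ℝ) (σ : Fin M → Fin N) (T : Fin N → ℕ) {i j : Fin N} (hij : i ≠ j) :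
    ∑ d ∈ DT N M T, ∑ k ∈ Finset.univ.filter (fun k => d k = j),
        Ffn N M t σ (Function.update d k i)
      = ((T i : ℝ) + 1) * (if 1 ≤ T j then Qfn N M t σ (moveDollar T i j) else 0) := by
  have hji : j ≠ i := fun h => hij h.symm
  by_cases hj : 1 ≤ T j
  · rw [if_pos hj]
    have hRHS : ((T i : ℝ) + 1) * Qfn N M t σ (moveDollar T i j)
        = ∑ d' ∈ DT N M (moveDollar T i j), ∑ _k ∈ Finset.univ.filter (fun k => d' k = i),
            Ffn N M t σ d' := by
      unfold Qfn
      rw [Finset.mul_sum]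
      refine Finset.sum_congr rfl fun d' hd' => ?_
      rw [Finset.sum_const, nsmul_eq_mul]
      have hc : cnt d' = moveDollar T i j := by simpa [DT] using hd'
      have hcard : (Finset.univ.filter (fun k => d' k = i)).card = T i + 1 := by
        have hci := congrFun hc i
        unfold cnt at hci
        rw [hci]
        unfold moveDollar
        rw [Function.update_of_ne hij, Function.update_self]
      rw [hcard]
      push_cast
      ring
    rw [hRHS, Finset.sum_sigma', Finset.sum_sigma']
    refine Finset.sum_nbij' (i := fun x => ⟨Function.update x.1 x.2 i, x.2⟩)
      (j := fun y => ⟨Function.update y.1 y.2 j, y.2⟩) ?_ ?_ ?_ ?_ ?_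
    · rintro ⟨d, k⟩ hx
      rw [Finset.mem_sigma] at hx
      obtain ⟨hd, hkmem⟩ := hx
      have hdk : d k = j := by simpa using hkmem
      have hcd : cnt d = T := by simpa [DT] using hd
      rw [Finset.mem_sigma]
      constructor
      · simp only [DT, Finset.mem_filter, Finset.mem_univ, true_and]
        rw [cnt_update hdk hij, hcd]
      · simp
    · rintro ⟨d', k⟩ hy
      rw [Finset.mem_sigma] at hy
      obtain ⟨hd', hkmem⟩ := hy
      have hdk : d' k = i := by simpa using hkmem
      have hcd : cnt d' = moveDollar T i j := by simpa [DT] using hd'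
      rw [Finset.mem_sigma]
      constructor
      · simp only [DT, Finset.mem_filter, Finset.mem_univ, true_and]
        rw [cnt_update hdk hji, hcd, moveDollar_moveDollar hij hj]
      · simp
    · rintro ⟨d, k⟩ hx
      rw [Finset.mem_sigma] at hx
      have hdk : d k = j := by simpa using hx.2
      simp only [Sigma.mk.inj_iff, heq_eq_eq]
      refine ⟨?_, trivial⟩
      rw [Function.update_idem, ← hdk, Function.update_eq_self]
    · rintro ⟨d', k⟩ hy
      rw [Finset.mem_sigma] at hy
      have hdk : d' k = i := by simpa using hy.2
      simp only [Sigma.mk.inj_iff, heq_eq_eq]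
      refine ⟨?_, trivial⟩
      rw [Function.update_idem, ← hdk, Function.update_eq_self]
    · rintro ⟨d, k⟩ _
      rfl
  · rw [if_neg hj, mul_zero]
    refine Finset.sum_eq_zero fun d hd => ?_
    have hc : cnt d = T := by simpa [DT] using hd
    have hfe : (Finset.univ.filter fun k => d k = j) = ∅ := by
      rw [← Finset.card_eq_zero]
      have hcj := congrFun hc j
      unfold cnt at hcj
      omega
    rw [hfe, Finset.sum_empty]

lemma sum_ite_ne (N : ℕ) (i : Fin N) (c : ℝ) :
    ∑ j, (if i ≠ j then c else 0) = ((N:ℝ) - 1) * c := by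
  have hpt : ∀ j : Fin N, (if i ≠ j then c else 0) = c - (if i = j then c else 0) := by
    intro j
    by_cases h : i = j
    · simp [h]
    · simp [h]
  rw [Finset.sum_congr rfl fun j _ => hpt j, Finset.sum_sub_distrib,
    Finset.sum_ite_eq Finset.univ i (fun _ => c), if_pos (Finset.mem_univ i),
    Finset.sum_const, Finset.card_univ, Fintype.card_fin, nsmul_eq_mul]
  ring

lemma ite_sum {α : Type*} {c : Prop} [Decidable c] (s : Finset α) (f : α → ℝ) :
    ∑ x ∈ s, (if c then f x else 0) = if c then ∑ x ∈ s, f x else 0 := by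
  split_ifs <;> simp

lemma hasDerivAt_Qfn (hN : 0 < N) (t : ℝ) (σ : Fin M → Fin N) (T : Fin N → ℕ)
    (hT : ∑ i, T i = M) :
    HasDerivAt (fun s => Qfn N M s σ T)
      (∑ i, ∑ j, if i ≠ j then
          (((T i : ℝ) + 1) / N * (if 1 ≤ T j then Qfn N M t σ (moveDollar T i j) else 0)
            - (T i : ℝ) / N * Qfn N M t σ T)
        else 0) t := by
  have hsum_iT : (∑ i, (T i : ℝ)) = (M:ℝ) := by exact_mod_cast congrArg (Nat.cast : ℕ → ℝ) hT
  have h := HasDerivAt.fun_sum (u := DT N M T)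
    (A := fun d s => Ffn N M s σ d)
    (A' := fun d => ∑ k, (∏ l ∈ Finset.univ.erase k, wfn N t (σ l) (d l))
      * (1 / N - wfn N t (σ k) (d k)))
    (fun d _ => hasDerivAt_Ffn t σ d)
  have hregroup : (∑ d ∈ DT N M T, ∑ k, ∑ b ∈ Finset.univ.erase (d k),
      Ffn N M t σ (Function.update d k b))
      = ∑ i, ∑ j, if i ≠ j then
          (((T i : ℝ) + 1) * (if 1 ≤ T j then Qfn N M t σ (moveDollar T i j) else 0))
        else 0 := by
    have hd1 : ∀ d ∈ DT N M T, (∑ k, ∑ b ∈ Finset.univ.erase (d k),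
        Ffn N M t σ (Function.update d k b))
        = ∑ j, ∑ k ∈ Finset.univ.filter (fun k => d k = j),
            ∑ i, if i ≠ j then Ffn N M t σ (Function.update d k i) else 0 := by
      intro d _
      rw [← Finset.sum_fiberwise_of_maps_to (g := d) (fun k _ => Finset.mem_univ (d k))
        (fun k => ∑ b ∈ Finset.univ.erase (d k), Ffn N M t σ (Function.update d k b))]
      refine Finset.sum_congr rfl fun j _ => Finset.sum_congr rfl fun k hk => ?_
      have hdk : d k = j := (Finset.mem_filter.mp hk).2
      subst hdk
      rw [← Finset.filter_ne' Finset.univ (d k), Finset.sum_filter]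
    have hperj : ∀ j, (∑ d ∈ DT N M T, ∑ k ∈ Finset.univ.filter (fun k => d k = j),
        ∑ i, if i ≠ j then Ffn N M t σ (Function.update d k i) else 0)
        = ∑ i, if i ≠ j then
            (((T i : ℝ) + 1) * (if 1 ≤ T j then Qfn N M t σ (moveDollar T i j) else 0))
          else 0 := by
      intro j
      calc (∑ d ∈ DT N M T, ∑ k ∈ Finset.univ.filter (fun k => d k = j),
            ∑ i, if i ≠ j then Ffn N M t σ (Function.update d k i) else 0)
          = ∑ d ∈ DT N M T, ∑ i : Fin N, ∑ k ∈ Finset.univ.filter (fun k => d k = j),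
              if i ≠ j then Ffn N M t σ (Function.update d k i) else 0 :=
            Finset.sum_congr rfl fun d _ => Finset.sum_comm
        _ = ∑ i : Fin N, ∑ d ∈ DT N M T, ∑ k ∈ Finset.univ.filter (fun k => d k = j),
              if i ≠ j then Ffn N M t σ (Function.update d k i) else 0 := Finset.sum_comm
        _ = ∑ i, if i ≠ j then
              (((T i : ℝ) + 1) * (if 1 ≤ T j then Qfn N M t σ (moveDollar T i j) else 0))
            else 0 := by
            refine Finset.sum_congr rfl fun i _ => ?_
            rw [Finset.sum_congr rfl fun d _ => ite_sum _ _, ite_sum]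
            by_cases hij : i ≠ j
            · rw [if_pos hij, if_pos hij, inflow t σ T hij]
            · rw [if_neg hij, if_neg hij]
    calc (∑ d ∈ DT N M T, ∑ k, ∑ b ∈ Finset.univ.erase (d k),
        Ffn N M t σ (Function.update d k b))
        = ∑ d ∈ DT N M T, ∑ j, ∑ k ∈ Finset.univ.filter (fun k => d k = j),
            ∑ i, if i ≠ j then Ffn N M t σ (Function.update d k i) else 0 :=
          Finset.sum_congr rfl hd1
      _ = ∑ j, ∑ d ∈ DT N M T, ∑ k ∈ Finset.univ.filter (fun k => d k = j),
            ∑ i, if i ≠ j then Ffn N M t σ (Function.update d k i) else 0 := Finset.sum_comm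
      _ = ∑ j, ∑ i, if i ≠ j then
            (((T i : ℝ) + 1) * (if 1 ≤ T j then Qfn N M t σ (moveDollar T i j) else 0))
          else 0 := Finset.sum_congr rfl fun j _ => hperj j
      _ = ∑ i, ∑ j, if i ≠ j then
            (((T i : ℝ) + 1) * (if 1 ≤ T j then Qfn N M t σ (moveDollar T i j) else 0))
          else 0 := Finset.sum_comm
  have hEQ : (∑ d ∈ DT N M T, ∑ k, (∏ l ∈ Finset.univ.erase k, wfn N t (σ l) (d l))
      * (1 / N - wfn N t (σ k) (d k)))
      = ∑ i, ∑ j, if i ≠ j then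
          (((T i : ℝ) + 1) / N * (if 1 ≤ T j then Qfn N M t σ (moveDollar T i j) else 0)
            - (T i : ℝ) / N * Qfn N M t σ T)
        else 0 := by
    rw [Finset.sum_congr rfl fun d _ => deriv_Ffn_eq hN t σ d, Finset.sum_sub_distrib,
      ← Finset.mul_sum, ← Finset.mul_sum, hregroup,
      show (∑ d ∈ DT N M T, Ffn N M t σ d) = Qfn N M t σ T from rfl]
    have hsplit : ∀ i : Fin N, (∑ j, if i ≠ j then
          (((T i:ℝ)+1)/N * (if 1 ≤ T j then Qfn N M t σ (moveDollar T i j) else 0)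
            - (T i:ℝ)/N * Qfn N M t σ T) else 0)
        = (1/(N:ℝ)) * (∑ j, if i ≠ j then
            ((T i:ℝ)+1) * (if 1 ≤ T j then Qfn N M t σ (moveDollar T i j) else 0) else 0)
          - ((N:ℝ)-1) * ((T i:ℝ)/N * Qfn N M t σ T) := by
      intro i
      rw [← sum_ite_ne N i ((T i:ℝ)/N * Qfn N M t σ T), Finset.mul_sum,
        ← Finset.sum_sub_distrib]
      refine Finset.sum_congr rfl fun j _ => ?_
      split_ifs <;> ring
    rw [Finset.sum_congr rfl fun i _ => hsplit i, Finset.sum_sub_distrib, ← Finset.mul_sum]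
    have hout : (∑ i, ((N:ℝ)-1) * ((T i:ℝ)/N * Qfn N M t σ T))
        = ((M:ℝ) * ((N:ℝ)-1)/N) * Qfn N M t σ T := by
      have h1 : ∀ i : Fin N, ((N:ℝ)-1) * ((T i:ℝ)/N * Qfn N M t σ T)
          = (T i : ℝ) * (((N:ℝ)-1)/N * Qfn N M t σ T) := fun i => by ring
      rw [Finset.sum_congr rfl fun i _ => h1 i, ← Finset.sum_mul, hsum_iT]
      ring
    rw [hout]
  rw [hEQ] at h
  exact h

/-! ### Identification of the solution -/

lemma Qfn_off_level {m : ℕ} (t : ℝ) (σ : Fin m → Fin N) {T : Fin N → ℕ}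
    (hT : ∑ i, T i ≠ m) : Qfn N m t σ T = 0 := by
  unfold Qfn
  have hempty : DT N m T = ∅ := by
    rw [Finset.eq_empty_iff_forall_notMem]
    intro d hd
    have hcd : cnt d = T := by simpa [DT] using hd
    exact hT (by rw [← hcd, cnt_sum])
  rw [hempty, Finset.sum_empty]

section Ident

variable (N μ : ℕ)

def sigC (S : {S // S ∈ lev N (N*μ)}) : Fin (N*μ) → Fin N :=
  (exists_cnt_eq (M := N*μ) (S : Fin N → ℕ) (mem_lev.mp S.2)).choose

lemma sigC_spec (S : {S // S ∈ lev N (N*μ)}) : cnt (sigC N μ S) = (S : Fin N → ℕ) :=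
  (exists_cnt_eq (M := N*μ) (S : Fin N → ℕ) (mem_lev.mp S.2)).choose_spec

def mixQ (P0 : Measure (Fin N → ℕ)) (t : ℝ) (T : Fin N → ℕ) : ℝ :=
  ∑ S : {S // S ∈ lev N (N*μ)},
    (P0 {(S : Fin N → ℕ)}).toReal * Qfn N (N*μ) t (sigC N μ S) T

lemma hasDerivAt_QfnVec (hN : 0 < N) (t : ℝ) (σ : Fin (N*μ) → Fin N) :
    HasDerivAt (fun s => (fun T : {S // S ∈ lev N (N*μ)} => Qfn N (N*μ) s σ ↑T))
      (vfFun N (N*μ) (fun T => Qfn N (N*μ) t σ ↑T)) t := by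
  rw [hasDerivAt_pi]
  intro T
  have h := hasDerivAt_Qfn hN t σ ↑T (mem_lev.mp T.2)
  refine h.congr_deriv ?_
  symm
  unfold vfFun
  refine Finset.sum_congr rfl fun i _ => Finset.sum_congr rfl fun j _ => ?_
  split_ifs with hij hj
  · rfl
  · simp
  · rfl

lemma vfFun_mix (P0 : Measure (Fin N → ℕ)) (t : ℝ) :
    vfFun N (N*μ) (fun T : {S // S ∈ lev N (N*μ)} => mixQ N μ P0 t ↑T)
      = ∑ S : {S // S ∈ lev N (N*μ)}, (P0 {(S : Fin N → ℕ)}).toReal •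
          vfFun N (N*μ) (fun T => Qfn N (N*μ) t (sigC N μ S) ↑T) := by
  have h1 : (fun T : {S // S ∈ lev N (N*μ)} => mixQ N μ P0 t ↑T)
      = ∑ S : {S // S ∈ lev N (N*μ)}, (P0 {(S : Fin N → ℕ)}).toReal •
          (fun T : {S // S ∈ lev N (N*μ)} => Qfn N (N*μ) t (sigC N μ S) ↑T) := by
    funext T
    rw [Finset.sum_apply]
    unfold mixQ
    exact Finset.sum_congr rfl fun S _ => rfl
  have h2 : vfFun N (N*μ) (fun T : {S // S ∈ lev N (N*μ)} => mixQ N μ P0 t ↑T)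
      = vfLin N (N*μ) (∑ S : {S // S ∈ lev N (N*μ)}, (P0 {(S : Fin N → ℕ)}).toReal •
          (fun T : {S // S ∈ lev N (N*μ)} => Qfn N (N*μ) t (sigC N μ S) ↑T)) := by
    rw [← h1]; rfl
  rw [h2, map_sum]
  exact Finset.sum_congr rfl fun S _ => by rw [_root_.map_smul]; rfl

lemma hasDerivAt_mixVec (hN : 0 < N) (P0 : Measure (Fin N → ℕ)) (t : ℝ) :
    HasDerivAt (fun s => (fun T : {S // S ∈ lev N (N*μ)} => mixQ N μ P0 s ↑T))
      (vfFun N (N*μ) (fun T => mixQ N μ P0 t ↑T)) t := by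
  rw [vfFun_mix]
  have h := HasDerivAt.fun_sum (u := (Finset.univ : Finset {S // S ∈ lev N (N*μ)}))
    (A := fun S s => (P0 {(S : Fin N → ℕ)}).toReal •
      (fun T : {S // S ∈ lev N (N*μ)} => Qfn N (N*μ) s (sigC N μ S) ↑T))
    (A' := fun S => (P0 {(S : Fin N → ℕ)}).toReal •
      vfFun N (N*μ) (fun T => Qfn N (N*μ) t (sigC N μ S) ↑T))
    (fun S _ => (hasDerivAt_QfnVec N μ hN t (sigC N μ S)).fun_const_smul _)
  refine h.congr_of_eventuallyEq (Filter.Eventually.of_forall fun s => ?_)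
  funext T
  beta_reduce
  rw [Finset.sum_apply]
  unfold mixQ
  exact Finset.sum_congr rfl fun S _ => rfl

lemma mixQ_zero (P0 : Measure (Fin N → ℕ)) (T : {S // S ∈ lev N (N*μ)}) :
    mixQ N μ P0 0 ↑T = (P0 {(T : Fin N → ℕ)}).toReal := by
  unfold mixQ
  have h1 : ∀ S : {S // S ∈ lev N (N*μ)},
      (P0 {(S : Fin N → ℕ)}).toReal * Qfn N (N*μ) 0 (sigC N μ S) ↑T
        = if S = T then (P0 {(T : Fin N → ℕ)}).toReal else 0 := by
    intro S
    rw [Qfn_zero, sigC_spec]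
    by_cases h : S = T
    · subst h; simp
    · rw [if_neg h, if_neg (fun hc => h (Subtype.coe_injective hc)), mul_zero]
  rw [Finset.sum_congr rfl fun S _ => h1 S, Finset.sum_ite_eq' Finset.univ T
    (fun _ => (P0 {(T : Fin N → ℕ)}).toReal), if_pos (Finset.mem_univ T)]

theorem P_singleton (hN : 0 < N) (P : ℝ → Measure (Fin N → ℕ)) (hP : IsMasterSolution P)
    (hP0 : P 0 ({S : Fin N → ℕ | ∑ i, S i = N * μ}ᶜ) = 0) :
    ∀ t ∈ Set.Ici (0:ℝ), ∀ T : Fin N → ℕ,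
      ((P t) {T}).toReal = mixQ N μ (P 0) t T := by
  have hderiv : ∀ m : ℕ, ∀ t ∈ Set.Ici (0:ℝ),
      HasDerivWithinAt
        (fun s => (fun T : {S // S ∈ lev N m} => ((P s) {(T : Fin N → ℕ)}).toReal))
        (vfFun N m (fun T : {S // S ∈ lev N m} => ((P t) {(T : Fin N → ℕ)}).toReal))
        (Set.Ici 0) t := by
    intro m t ht
    rw [hasDerivWithinAt_pi]
    intro T
    have h := hP.2 ↑T t ht
    rw [masterRHS_eq (P t) (↑T) T.2] at h
    exact h
  intro t ht T
  by_cases hTlev : ∑ i, T i = N * μ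
  · have hmain := level_unique (m := N*μ)
      (fun s => fun T' : {S // S ∈ lev N (N*μ)} => ((P s) {(T' : Fin N → ℕ)}).toReal)
      (fun s => fun T' : {S // S ∈ lev N (N*μ)} => mixQ N μ (P 0) s ↑T')
      (hderiv (N*μ))
      (fun s hs => (hasDerivAt_mixVec N μ hN (P 0) s).hasDerivWithinAt)
      (by funext T'; exact (mixQ_zero N μ (P 0) T').symm) t ht
    exact congrFun hmain ⟨T, mem_lev.mpr hTlev⟩
  · -- off level
    have hz0 : vfFun N (∑ i, T i) (0 : {S // S ∈ lev N (∑ i, T i)} → ℝ) = 0 :=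
      map_zero (vfLin N (∑ i, T i))
    have hzero := level_unique (m := ∑ i, T i)
      (fun s => fun T' : {S // S ∈ lev N (∑ i, T i)} => ((P s) {(T' : Fin N → ℕ)}).toReal)
      (fun _ => 0)
      (hderiv (∑ i, T i))
      (fun s hs => by
        rw [hz0]
        exact (hasDerivWithinAt_const s (Set.Ici (0:ℝ)) (0 : {S // S ∈ lev N (∑ i, T i)} → ℝ)))
      (by
        funext T'
        have hmem : ({(T' : Fin N → ℕ)} : Set (Fin N → ℕ))
            ⊆ {S : Fin N → ℕ | ∑ i, S i = N * μ}ᶜ := by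
          intro x hx
          rw [Set.mem_singleton_iff] at hx
          subst hx
          simp only [Set.mem_compl_iff, Set.mem_setOf_eq]
          rw [mem_lev.mp T'.2]
          exact hTlev
        have : P 0 {(T' : Fin N → ℕ)} = 0 := measure_mono_null hmem hP0
        simp [this]) t ht
    have hz := congrFun hzero ⟨T, mem_lev.mpr rfl⟩
    simp only at hz
    rw [hz]
    symm
    unfold mixQ
    refine Finset.sum_eq_zero fun S _ => ?_
    rw [Qfn_off_level _ _ hTlev, mul_zero]

end Ident
/-! ### The coupling kernel -/

def nu (N : ℕ) (t : ℝ) (a b c : Fin N) : ℝ :=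
  (Real.exp (-t) / N) * (if a = b then 1 else 0)
    + ((1 - Real.exp (-t)) / N) * (if b = c then 1 else 0)

lemma nu_nonneg (hNpos : 0 < N) {t : ℝ} (ht : 0 ≤ t) (a b c : Fin N) : 0 ≤ nu N t a b c := by
  unfold nu
  have h1 := exp_neg_le_one ht
  have h2 : (0:ℝ) ≤ Real.exp (-t) / N := div_nonneg (Real.exp_pos _).le (Nat.cast_nonneg N)
  have h3 : (0:ℝ) ≤ (1 - Real.exp (-t)) / N := div_nonneg (by linarith) (Nat.cast_nonneg N)
  have h4 : (0:ℝ) ≤ (if a = b then (1:ℝ) else 0) := by positivity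
  have h5 : (0:ℝ) ≤ (if b = c then (1:ℝ) else 0) := by positivity
  positivity

lemma nu_sum_c (hNpos : 0 < N) (t : ℝ) (a b : Fin N) :
    ∑ c, nu N t a b c = wfn N t a b := by
  unfold nu wfn
  have hN' : (N:ℝ) ≠ 0 := Nat.cast_ne_zero.mpr hNpos.ne'
  rw [Finset.sum_add_distrib, ← Finset.mul_sum, ← Finset.mul_sum,
    Finset.sum_ite_eq Finset.univ b (fun _ => (1:ℝ)), if_pos (Finset.mem_univ b),
    Finset.sum_const, Finset.card_univ, Fintype.card_fin, nsmul_eq_mul]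
  by_cases h : a = b
  · simp only [if_pos h]
    field_simp
  · simp only [if_neg h]
    ring

lemma nu_sum_b (hNpos : 0 < N) (t : ℝ) (a c : Fin N) :
    ∑ b, nu N t a b c = 1 / N := by
  unfold nu
  have hN' : (N:ℝ) ≠ 0 := Nat.cast_ne_zero.mpr hNpos.ne'
  rw [Finset.sum_add_distrib, ← Finset.mul_sum, ← Finset.mul_sum,
    Finset.sum_ite_eq Finset.univ a (fun _ => (1:ℝ)), if_pos (Finset.mem_univ a),
    Finset.sum_ite_eq' Finset.univ c (fun _ => (1:ℝ)), if_pos (Finset.mem_univ c)]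
  field_simp
  ring

lemma nu_sum_pair (hNpos : 0 < N) (t : ℝ) (a : Fin N) :
    ∑ y : Fin N × Fin N, nu N t a y.1 y.2 = 1 := by
  rw [Fintype.sum_prod_type]
  rw [Finset.sum_congr rfl fun b _ => nu_sum_c hNpos t a b]
  exact sum_wfn hNpos t a

lemma nu_mismatch_le (hNpos : 0 < N) {t : ℝ} (ht : 0 ≤ t) (a : Fin N) :
    ∑ y : Fin N × Fin N, (if y.1 ≠ y.2 then nu N t a y.1 y.2 else 0) ≤ Real.exp (-t) := by
  have hN' : (N:ℝ) ≠ 0 := Nat.cast_ne_zero.mpr hNpos.ne'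
  have hbound : ∀ y : Fin N × Fin N, (if y.1 ≠ y.2 then nu N t a y.1 y.2 else 0)
      ≤ (Real.exp (-t) / N) * (if a = y.1 then 1 else 0) := by
    intro y
    by_cases h : y.1 = y.2
    · rw [if_neg (by simpa using h)]
      have := div_nonneg (Real.exp_pos (-t)).le (Nat.cast_nonneg N)
      positivity
    · rw [if_pos h]
      unfold nu
      rw [if_neg h, mul_zero, add_zero]
  calc ∑ y : Fin N × Fin N, (if y.1 ≠ y.2 then nu N t a y.1 y.2 else 0)
      ≤ ∑ y : Fin N × Fin N, (Real.exp (-t) / N) * (if a = y.1 then 1 else 0) :=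
        Finset.sum_le_sum fun y _ => hbound y
    _ = Real.exp (-t) := by
        rw [Fintype.sum_prod_type]
        have hb : ∀ b : Fin N, (∑ _y : Fin N, Real.exp (-t) / N * if a = b then (1:ℝ) else 0)
            = Real.exp (-t) * (if a = b then 1 else 0) := by
          intro b
          rw [Finset.sum_const, Finset.card_univ, Fintype.card_fin, nsmul_eq_mul]
          by_cases h : a = b
          · simp only [if_pos h]
            field_simp
          · simp only [if_neg h]
            ring
        rw [Finset.sum_congr rfl fun b _ => hb b, ← Finset.mul_sum,
          Finset.sum_ite_eq Finset.univ a (fun _ => (1:ℝ)), if_pos (Finset.mem_univ a), mul_one]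

lemma sum_fn_prod {M : ℕ} {X : Type*} [Fintype X] [DecidableEq X] (g : Fin M → X → ℝ) :
    ∑ d : Fin M → X, ∏ k, g k (d k) = ∏ k, ∑ x, g k x := by
  rw [Finset.prod_univ_sum]
  rw [Fintype.piFinset_univ]

def pairEquiv (N M : ℕ) : ((Fin M → Fin N) × (Fin M → Fin N)) ≃ (Fin M → Fin N × Fin N) where
  toFun p := fun k => (p.1 k, p.2 k)
  invFun dd := (fun k => (dd k).1, fun k => (dd k).2)
  left_inv p := rfl
  right_inv dd := rfl

lemma real_fst (hNpos : 0 < N) {t : ℝ} (σ : Fin M → Fin N) (T : Fin N → ℕ) :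
    ∑ dd : Fin M → Fin N × Fin N,
        (∏ k, nu N t (σ k) (dd k).1 (dd k).2)
          * (if cnt (fun k => (dd k).1) = T then (1:ℝ) else 0)
      = Qfn N M t σ T := by
  rw [← Fintype.sum_equiv (pairEquiv N M)
    (fun p => (∏ k, nu N t (σ k) (p.1 k) (p.2 k))
      * (if cnt p.1 = T then (1:ℝ) else 0))
    (fun dd => (∏ k, nu N t (σ k) (dd k).1 (dd k).2)
      * (if cnt (fun k => (dd k).1) = T then (1:ℝ) else 0))
    (fun p => rfl)]
  rw [Fintype.sum_prod_type]
  have hinner : ∀ d1 : Fin M → Fin N,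
      (∑ d2 : Fin M → Fin N, (∏ k, nu N t (σ k) (d1 k) (d2 k))
          * (if cnt d1 = T then (1:ℝ) else 0))
      = (if cnt d1 = T then Ffn N M t σ d1 else 0) := by
    intro d1
    rw [← Finset.sum_mul]
    rw [sum_fn_prod (fun k c => nu N t (σ k) (d1 k) c)]
    rw [Finset.prod_congr rfl fun k _ => nu_sum_c hNpos t (σ k) (d1 k)]
    by_cases h : cnt d1 = T
    · rw [if_pos h, if_pos h, mul_one]; rfl
    · rw [if_neg h, if_neg h, mul_zero]
  rw [Finset.sum_congr rfl fun d1 _ => hinner d1, ← Finset.sum_filter]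
  rfl

lemma real_snd (hNpos : 0 < N) {t : ℝ} (σ : Fin M → Fin N) (T : Fin N → ℕ) :
    ∑ dd : Fin M → Fin N × Fin N,
        (∏ k, nu N t (σ k) (dd k).1 (dd k).2)
          * (if cnt (fun k => (dd k).2) = T then (1:ℝ) else 0)
      = ((DT N M T).card : ℝ) * (1 / N)^M := by
  rw [← Fintype.sum_equiv (pairEquiv N M)
    (fun p => (∏ k, nu N t (σ k) (p.1 k) (p.2 k))
      * (if cnt p.2 = T then (1:ℝ) else 0))
    (fun dd => (∏ k, nu N t (σ k) (dd k).1 (dd k).2)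
      * (if cnt (fun k => (dd k).2) = T then (1:ℝ) else 0))
    (fun p => rfl)]
  rw [Fintype.sum_prod_type]
  rw [Finset.sum_comm]
  have hinner : ∀ d2 : Fin M → Fin N,
      (∑ d1 : Fin M → Fin N, (∏ k, nu N t (σ k) (d1 k) (d2 k))
          * (if cnt d2 = T then (1:ℝ) else 0))
      = (if cnt d2 = T then ((1:ℝ) / N)^M else 0) := by
    intro d2
    rw [← Finset.sum_mul]
    rw [sum_fn_prod (fun k b => nu N t (σ k) b (d2 k))]
    rw [Finset.prod_congr rfl fun k _ => nu_sum_b hNpos t (σ k) (d2 k)]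
    rw [Finset.prod_const, Finset.card_univ, Fintype.card_fin]
    by_cases h : cnt d2 = T
    · rw [if_pos h, if_pos h, mul_one]
    · rw [if_neg h, if_neg h, mul_zero]
  rw [Finset.sum_congr rfl fun d2 _ => hinner d2, ← Finset.sum_filter]
  rw [Finset.sum_const, nsmul_eq_mul]
  rfl

lemma mismatch_sum_le (hNpos : 0 < N) {t : ℝ} (ht : 0 ≤ t) (σ : Fin M → Fin N) :
    ∑ dd : Fin M → Fin N × Fin N, (∏ k, nu N t (σ k) (dd k).1 (dd k).2)
        * ((Finset.univ.filter fun k => (dd k).1 ≠ (dd k).2).card : ℝ)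
      ≤ M * Real.exp (-t) := by
  have hmm : ∀ dd : Fin M → Fin N × Fin N,
      ((Finset.univ.filter fun k => (dd k).1 ≠ (dd k).2).card : ℝ)
        = ∑ k, (if (dd k).1 ≠ (dd k).2 then (1:ℝ) else 0) := by
    intro dd
    rw [Finset.card_filter, Nat.cast_sum]
    exact Finset.sum_congr rfl fun k _ => by split_ifs <;> simp
  have hkey : ∀ k : Fin M,
      (∑ dd : Fin M → Fin N × Fin N, (∏ l, nu N t (σ l) (dd l).1 (dd l).2)
        * (if (dd k).1 ≠ (dd k).2 then (1:ℝ) else 0)) ≤ Real.exp (-t) := by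
    intro k
    have hfact : (∑ dd : Fin M → Fin N × Fin N, (∏ l, nu N t (σ l) (dd l).1 (dd l).2)
        * (if (dd k).1 ≠ (dd k).2 then (1:ℝ) else 0))
        = ∏ l, ∑ y : Fin N × Fin N,
            (nu N t (σ l) y.1 y.2 * (if l = k then (if y.1 ≠ y.2 then (1:ℝ) else 0) else 1)) := by
      rw [← sum_fn_prod (fun l (y : Fin N × Fin N) => nu N t (σ l) y.1 y.2
        * (if l = k then (if y.1 ≠ y.2 then (1:ℝ) else 0) else 1))]
      refine Finset.sum_congr rfl fun dd _ => ?_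
      rw [Finset.prod_mul_distrib]
      congr 1
      rw [Finset.prod_ite_eq' Finset.univ k
        (fun l => if (dd l).1 ≠ (dd l).2 then (1:ℝ) else 0), if_pos (Finset.mem_univ k)]
    have hl : ∀ l : Fin M, (∑ y : Fin N × Fin N,
        (nu N t (σ l) y.1 y.2 * (if l = k then (if y.1 ≠ y.2 then (1:ℝ) else 0) else 1)))
        = if l = k then (∑ y : Fin N × Fin N,
            (if y.1 ≠ y.2 then nu N t (σ k) y.1 y.2 else 0)) else 1 := by
      intro l
      by_cases hlk : l = k
      · subst hlk
        rw [if_pos rfl]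
        refine Finset.sum_congr rfl fun y _ => ?_
        by_cases h : y.1 ≠ y.2
        · rw [if_pos rfl, if_pos h, if_pos h, mul_one]
        · rw [if_pos rfl, if_neg h, if_neg h, mul_zero]
      · rw [if_neg hlk]
        rw [Finset.sum_congr rfl fun y _ => by rw [if_neg hlk, mul_one]]
        exact nu_sum_pair hNpos t (σ l)
    rw [hfact, Finset.prod_congr rfl fun l _ => hl l,
      Finset.prod_ite_eq' Finset.univ k (fun _ => ∑ y : Fin N × Fin N,
        (if y.1 ≠ y.2 then nu N t (σ k) y.1 y.2 else 0)), if_pos (Finset.mem_univ k)]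
    exact nu_mismatch_le hNpos ht (σ k)
  calc ∑ dd : Fin M → Fin N × Fin N, (∏ k, nu N t (σ k) (dd k).1 (dd k).2)
        * ((Finset.univ.filter fun k => (dd k).1 ≠ (dd k).2).card : ℝ)
      = ∑ dd : Fin M → Fin N × Fin N, ∑ k, (∏ l, nu N t (σ l) (dd l).1 (dd l).2)
          * (if (dd k).1 ≠ (dd k).2 then (1:ℝ) else 0) := by
        refine Finset.sum_congr rfl fun dd _ => ?_
        rw [hmm dd, Finset.mul_sum]
    _ = ∑ k, ∑ dd : Fin M → Fin N × Fin N, (∏ l, nu N t (σ l) (dd l).1 (dd l).2)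
          * (if (dd k).1 ≠ (dd k).2 then (1:ℝ) else 0) := Finset.sum_comm
    _ ≤ ∑ _k : Fin M, Real.exp (-t) := Finset.sum_le_sum fun k _ => hkey k
    _ = M * Real.exp (-t) := by
        rw [Finset.sum_const, Finset.card_univ, Fintype.card_fin, nsmul_eq_mul]

lemma nat_dist_le (x a b : ℕ) : Nat.dist (x + a) (x + b) ≤ a + b := by
  simp [Nat.dist]
  omega

lemma cost_le_mismatch {M : ℕ} (dd : Fin M → Fin N × Fin N) :
    ∑ j, Nat.dist (cnt (fun k => (dd k).1) j) (cnt (fun k => (dd k).2) j)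
      ≤ 2 * (Finset.univ.filter fun k => (dd k).1 ≠ (dd k).2).card := by
  set mm := Finset.univ.filter fun k => (dd k).1 ≠ (dd k).2 with hmm
  have hsplit : ∀ j : Fin N, Nat.dist (cnt (fun k => (dd k).1) j) (cnt (fun k => (dd k).2) j)
      ≤ (mm.filter fun k => (dd k).1 = j).card + (mm.filter fun k => (dd k).2 = j).card := by
    intro j
    have h1 : cnt (fun k => (dd k).1) j
        = (Finset.univ.filter fun k => (dd k).1 = j ∧ (dd k).2 = j).card
          + (mm.filter fun k => (dd k).1 = j).card := by
      have ha : (mm.filter fun k => (dd k).1 = j)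
          = Finset.univ.filter fun k => (dd k).1 = j ∧ ¬ (dd k).2 = j := by
        ext k
        simp only [hmm, Finset.mem_filter, Finset.mem_univ, true_and]
        constructor
        · rintro ⟨hne, hj⟩; exact ⟨hj, fun hc => hne (hj.trans hc.symm)⟩
        · rintro ⟨hj, hne⟩; exact ⟨fun hc => hne (hc ▸ hj ▸ rfl) , hj⟩
      rw [ha]
      unfold cnt
      beta_reduce
      have := Finset.card_filter_add_card_filter_not
        (s := Finset.univ.filter fun k => (dd k).1 = j) (p := fun k => (dd k).2 = j)
      rw [Finset.filter_filter, Finset.filter_filter] at this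
      omega
    have h2 : cnt (fun k => (dd k).2) j
        = (Finset.univ.filter fun k => (dd k).1 = j ∧ (dd k).2 = j).card
          + (mm.filter fun k => (dd k).2 = j).card := by
      have ha : (mm.filter fun k => (dd k).2 = j)
          = Finset.univ.filter fun k => (dd k).2 = j ∧ ¬ (dd k).1 = j := by
        ext k
        simp only [hmm, Finset.mem_filter, Finset.mem_univ, true_and]
        constructor
        · rintro ⟨hne, hj⟩; exact ⟨hj, fun hc => hne (hc.trans hj.symm)⟩
        · rintro ⟨hj, hne⟩; exact ⟨fun hc => hne (hc ▸ hj ▸ rfl), hj⟩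
      rw [ha]
      unfold cnt
      beta_reduce
      have := Finset.card_filter_add_card_filter_not
        (s := Finset.univ.filter fun k => (dd k).2 = j) (p := fun k => (dd k).1 = j)
      rw [Finset.filter_filter, Finset.filter_filter] at this
      have hcomm : (Finset.univ.filter fun k => (dd k).2 = j ∧ (dd k).1 = j)
          = Finset.univ.filter fun k => (dd k).1 = j ∧ (dd k).2 = j := by
        ext k; simp [and_comm]
      rw [hcomm] at this
      omega
    calc Nat.dist (cnt (fun k => (dd k).1) j) (cnt (fun k => (dd k).2) j)
        = Nat.dist ((Finset.univ.filter fun k => (dd k).1 = j ∧ (dd k).2 = j).card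
            + (mm.filter fun k => (dd k).1 = j).card)
          ((Finset.univ.filter fun k => (dd k).1 = j ∧ (dd k).2 = j).card
            + (mm.filter fun k => (dd k).2 = j).card) := by rw [← h1, ← h2]
      _ ≤ _ := nat_dist_le _ _ _
  calc ∑ j, Nat.dist (cnt (fun k => (dd k).1) j) (cnt (fun k => (dd k).2) j)
      ≤ ∑ j, ((mm.filter fun k => (dd k).1 = j).card
          + (mm.filter fun k => (dd k).2 = j).card) := Finset.sum_le_sum fun j _ => hsplit j
    _ = 2 * mm.card := by
        rw [Finset.sum_add_distrib,
          ← Finset.card_eq_sum_card_fiberwise (f := fun k => (dd k).1) (t := Finset.univ)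
            (fun k _ => Finset.mem_univ _),
          ← Finset.card_eq_sum_card_fiberwise (f := fun k => (dd k).2) (t := Finset.univ)
            (fun k _ => Finset.mem_univ _)]
        ring

/-! ### The coupling measure and the main theorem -/

lemma meas_eq_of_singletons {α : Type*} [MeasurableSpace α] [Countable α]
    [MeasurableSingletonClass α] {m1 m2 : Measure α} (h : ∀ a, m1 {a} = m2 {a}) :
    m1 = m2 := by
  rw [← Measure.sum_smul_dirac m1, ← Measure.sum_smul_dirac m2]
  congr 1
  funext a
  rw [h a]

lemma sum_smul_dirac_sing {ι α : Type*} [Countable ι] [MeasurableSpace α]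
    [MeasurableSingletonClass α] [DecidableEq α] (c : ι → ℝ≥0∞) (f : ι → α) (a : α) :
    (Measure.sum fun i => c i • Measure.dirac (f i)) {a}
      = ∑' i, c i * (if f i = a then 1 else 0) := by
  rw [Measure.sum_apply _ (measurableSet_singleton a)]
  congr 1
  funext i
  rw [Measure.smul_apply, smul_eq_mul,
    Measure.dirac_apply' (f i) (measurableSet_singleton a)]
  congr 1
  by_cases h : f i = a
  · simp [Set.indicator_apply, h]
  · simp [Set.indicator_apply, h]

lemma MNmeas_singleton (N μ : ℕ) (T : Fin N → ℕ) :
    MNmeas N μ {T} = (if ∑ i, T i = N * μ then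
        ENNReal.ofReal (((N * μ).factorial : ℝ)
          / ((∏ i, (T i).factorial : ℕ) * (N : ℝ) ^ (N * μ)))
      else 0) := by
  rw [MNmeas, Measure.sum_apply _ (measurableSet_singleton T)]
  have hz : ∀ S : Fin N → ℕ, S ≠ T →
      ((if ∑ i, S i = N * μ then
          ENNReal.ofReal (((N * μ).factorial : ℝ)
            / ((∏ i, (S i).factorial : ℕ) * (N : ℝ) ^ (N * μ)))
        else 0) • Measure.dirac S) ({T} : Set (Fin N → ℕ)) = 0 := by
    intro S hST
    rw [Measure.smul_apply, smul_eq_mul,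
      Measure.dirac_apply' S (measurableSet_singleton T)]
    simp [Set.indicator_apply, hST]
  rw [tsum_eq_single T hz, Measure.smul_apply, smul_eq_mul,
    Measure.dirac_apply' T (measurableSet_singleton T)]
  simp [Set.indicator_apply]

lemma DT_empty {m : ℕ} {T : Fin N → ℕ} (hT : ∑ i, T i ≠ m) : DT N m T = ∅ := by
  rw [Finset.eq_empty_iff_forall_notMem]
  intro d hd
  have hcd : cnt d = T := by simpa [DT] using hd
  exact hT (by rw [← hcd, cnt_sum])

lemma MNmeas_singleton_card (N μ : ℕ) (hNpos : 0 < N) (T : Fin N → ℕ) :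
    MNmeas N μ {T}
      = ENNReal.ofReal (((DT N (N*μ) T).card : ℝ) * (1 / (N:ℝ)) ^ (N*μ)) := by
  rw [MNmeas_singleton]
  by_cases h : ∑ i, T i = N * μ
  · rw [if_pos h]
    congr 1
    have hcount : (DT N (N*μ) T).card * ∏ i, (T i).factorial = (N*μ).factorial :=
      card_cnt_eq_mul_factorial T h
    have hfac : (((N*μ).factorial : ℕ) : ℝ)
        = ((DT N (N*μ) T).card : ℝ) * ((∏ i, (T i).factorial : ℕ) : ℝ) := by
      exact_mod_cast congrArg (Nat.cast : ℕ → ℝ) hcount.symm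
    rw [hfac]
    have h1 : ((∏ i, (T i).factorial : ℕ) : ℝ) ≠ 0 := by
      exact_mod_cast (Finset.prod_pos fun i _ => Nat.factorial_pos _).ne'
    have h2 : (N:ℝ) ^ (N*μ) ≠ 0 := pow_ne_zero _ (Nat.cast_ne_zero.mpr hNpos.ne')
    field_simp
    rw [mul_assoc, ← mul_pow, mul_one_div_cancel (Nat.cast_ne_zero.mpr hNpos.ne' : (N:ℝ) ≠ 0),
      one_pow, mul_one]
  · rw [if_neg h, DT_empty h]
    simp

lemma P0_mass (N μ : ℕ) (P0 : Measure (Fin N → ℕ)) [IsProbabilityMeasure P0]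
    (hP0 : P0 ({S : Fin N → ℕ | ∑ i, S i = N * μ}ᶜ) = 0) :
    ∑ S : {S // S ∈ lev N (N*μ)}, P0 {(S : Fin N → ℕ)} = 1 := by
  have hsets : {S : Fin N → ℕ | ∑ i, S i = N * μ}
      = ⋃ S ∈ lev N (N*μ), ({S} : Set (Fin N → ℕ)) := by
    ext x
    simp only [Set.mem_setOf_eq, Set.mem_iUnion, Set.mem_singleton_iff]
    constructor
    · intro hx; exact ⟨x, mem_lev.mpr hx, rfl⟩
    · rintro ⟨S, hS, rfl⟩; exact mem_lev.mp hS
  have h1 : P0 {S : Fin N → ℕ | ∑ i, S i = N * μ} = ∑ S ∈ lev N (N*μ), P0 {S} := by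
    rw [hsets]
    rw [measure_biUnion_finset ?_ (fun S _ => measurableSet_singleton S)]
    intro a _ b _ hab
    simp [Function.onFun, Set.disjoint_singleton, hab]
  have h2 : P0 {S : Fin N → ℕ | ∑ i, S i = N * μ} = 1 := by
    have hle : (1:ℝ≥0∞) ≤ P0 {S : Fin N → ℕ | ∑ i, S i = N * μ} := by
      calc (1:ℝ≥0∞) = P0 Set.univ := (measure_univ (μ := P0)).symm
        _ ≤ P0 ({S : Fin N → ℕ | ∑ i, S i = N * μ}
              ∪ {S : Fin N → ℕ | ∑ i, S i = N * μ}ᶜ) :=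
            measure_mono (by rw [Set.union_compl_self])
        _ ≤ P0 {S : Fin N → ℕ | ∑ i, S i = N * μ}
              + P0 ({S : Fin N → ℕ | ∑ i, S i = N * μ}ᶜ) := measure_union_le _ _
        _ = P0 {S : Fin N → ℕ | ∑ i, S i = N * μ} := by rw [hP0, add_zero]
    exact le_antisymm prob_le_one hle
  rw [Finset.sum_coe_sort (lev N (N*μ)) (fun S => P0 {S}), ← h1, h2]

section Coupling

variable (N μ : ℕ)

def cplWt (P0 : Measure (Fin N → ℕ)) (t : ℝ)
    (x : {S // S ∈ lev N (N*μ)} × (Fin (N*μ) → Fin N × Fin N)) : ℝ≥0∞ :=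
  P0 {(x.1 : Fin N → ℕ)}
    * ENNReal.ofReal (∏ k, nu N t (sigC N μ x.1 k) (x.2 k).1 (x.2 k).2)

def cplPos (x : {S // S ∈ lev N (N*μ)} × (Fin (N*μ) → Fin N × Fin N)) :
    (Fin N → ℕ) × (Fin N → ℕ) :=
  (cnt (fun k => (x.2 k).1), cnt (fun k => (x.2 k).2))

def cpl (P0 : Measure (Fin N → ℕ)) (t : ℝ) : Measure ((Fin N → ℕ) × (Fin N → ℕ)) :=
  Measure.sum (fun x => cplWt N μ P0 t x • Measure.dirac (cplPos N μ x))

lemma cpl_sing_fst (P0 : Measure (Fin N → ℕ)) (t : ℝ) (T : Fin N → ℕ) :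
    (cpl N μ P0 t).map Prod.fst {T}
      = ∑ S : {S // S ∈ lev N (N*μ)}, ∑ dd : Fin (N*μ) → Fin N × Fin N,
          cplWt N μ P0 t (S, dd) * (if cnt (fun k => (dd k).1) = T then 1 else 0) := by
  have hmapped : (cpl N μ P0 t).map Prod.fst
      = Measure.sum (fun x => cplWt N μ P0 t x • Measure.dirac ((cplPos N μ x).1)) := by
    rw [cpl, Measure.map_sum measurable_fst.aemeasurable]
    congr 1
    funext x
    rw [Measure.map_smul, Measure.map_dirac' measurable_fst]
  rw [hmapped, sum_smul_dirac_sing, tsum_fintype, Fintype.sum_prod_type]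
  rfl

lemma cpl_sing_snd (P0 : Measure (Fin N → ℕ)) (t : ℝ) (T : Fin N → ℕ) :
    (cpl N μ P0 t).map Prod.snd {T}
      = ∑ S : {S // S ∈ lev N (N*μ)}, ∑ dd : Fin (N*μ) → Fin N × Fin N,
          cplWt N μ P0 t (S, dd) * (if cnt (fun k => (dd k).2) = T then 1 else 0) := by
  have hmapped : (cpl N μ P0 t).map Prod.snd
      = Measure.sum (fun x => cplWt N μ P0 t x • Measure.dirac ((cplPos N μ x).2)) := by
    rw [cpl, Measure.map_sum measurable_snd.aemeasurable]
    congr 1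
    funext x
    rw [Measure.map_smul, Measure.map_dirac' measurable_snd]
  rw [hmapped, sum_smul_dirac_sing, tsum_fintype, Fintype.sum_prod_type]
  rfl

lemma inner_fst (hNpos : 0 < N) {t : ℝ} (ht : 0 ≤ t) (P0 : Measure (Fin N → ℕ))
    (S : {S // S ∈ lev N (N*μ)}) (T : Fin N → ℕ) :
    (∑ dd : Fin (N*μ) → Fin N × Fin N,
        cplWt N μ P0 t (S, dd) * (if cnt (fun k => (dd k).1) = T then 1 else 0))
      = P0 {(S : Fin N → ℕ)} * ENNReal.ofReal (Qfn N (N*μ) t (sigC N μ S) T) := by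
  have hstep : ∀ dd : Fin (N*μ) → Fin N × Fin N,
      cplWt N μ P0 t (S, dd) * (if cnt (fun k => (dd k).1) = T then 1 else 0)
        = P0 {(S : Fin N → ℕ)} * ENNReal.ofReal
            ((∏ k, nu N t (sigC N μ S k) (dd k).1 (dd k).2)
              * (if cnt (fun k => (dd k).1) = T then (1:ℝ) else 0)) := by
    intro dd
    unfold cplWt
    by_cases h : cnt (fun k => (dd k).1) = T
    · simp [h]
    · simp [h]
  rw [Finset.sum_congr rfl fun dd _ => hstep dd, ← Finset.mul_sum]
  congr 1
  rw [← ENNReal.ofReal_sum_of_nonneg (fun dd _ => mul_nonneg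
    (Finset.prod_nonneg fun k _ => nu_nonneg hNpos ht _ _ _) (by positivity)),
    real_fst hNpos (sigC N μ S) T]

lemma inner_snd (hNpos : 0 < N) {t : ℝ} (ht : 0 ≤ t) (P0 : Measure (Fin N → ℕ))
    (S : {S // S ∈ lev N (N*μ)}) (T : Fin N → ℕ) :
    (∑ dd : Fin (N*μ) → Fin N × Fin N,
        cplWt N μ P0 t (S, dd) * (if cnt (fun k => (dd k).2) = T then 1 else 0))
      = P0 {(S : Fin N → ℕ)}
          * ENNReal.ofReal (((DT N (N*μ) T).card : ℝ) * (1 / (N:ℝ)) ^ (N*μ)) := by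
  have hstep : ∀ dd : Fin (N*μ) → Fin N × Fin N,
      cplWt N μ P0 t (S, dd) * (if cnt (fun k => (dd k).2) = T then 1 else 0)
        = P0 {(S : Fin N → ℕ)} * ENNReal.ofReal
            ((∏ k, nu N t (sigC N μ S k) (dd k).1 (dd k).2)
              * (if cnt (fun k => (dd k).2) = T then (1:ℝ) else 0)) := by
    intro dd
    unfold cplWt
    by_cases h : cnt (fun k => (dd k).2) = T
    · simp [h]
    · simp [h]
  rw [Finset.sum_congr rfl fun dd _ => hstep dd, ← Finset.mul_sum]
  congr 1
  rw [← ENNReal.ofReal_sum_of_nonneg (fun dd _ => mul_nonneg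
    (Finset.prod_nonneg fun k _ => nu_nonneg hNpos ht _ _ _) (by positivity)),
    real_snd hNpos (sigC N μ S) T]

lemma cpl_fst (hNpos : 0 < N) (P : ℝ → Measure (Fin N → ℕ)) (hP : IsMasterSolution P)
    (hP0 : P 0 ({S : Fin N → ℕ | ∑ i, S i = N * μ}ᶜ) = 0)
    {t : ℝ} (ht : t ∈ Set.Ici (0:ℝ)) :
    (cpl N μ (P 0) t).map Prod.fst = P t := by
  haveI := hP.1 t ht
  haveI : IsProbabilityMeasure (P 0) := hP.1 0 Set.self_mem_Ici
  refine meas_eq_of_singletons fun T => ?_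
  rw [cpl_sing_fst, Finset.sum_congr rfl fun S _ => inner_fst N μ hNpos ht (P 0) S T]
  have hPt : P t {T} = ENNReal.ofReal (mixQ N μ (P 0) t T) := by
    rw [← P_singleton N μ hNpos P hP hP0 t ht T,
      ENNReal.ofReal_toReal (measure_ne_top _ _)]
  rw [hPt]
  unfold mixQ
  rw [ENNReal.ofReal_sum_of_nonneg
    (fun S _ => mul_nonneg ENNReal.toReal_nonneg (Qfn_nonneg ht _ _))]
  refine Finset.sum_congr rfl fun S _ => ?_
  rw [ENNReal.ofReal_mul ENNReal.toReal_nonneg,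
    ENNReal.ofReal_toReal (measure_ne_top _ _)]

lemma cpl_snd (hNpos : 0 < N) (P0 : Measure (Fin N → ℕ)) [IsProbabilityMeasure P0]
    (hP0 : P0 ({S : Fin N → ℕ | ∑ i, S i = N * μ}ᶜ) = 0) {t : ℝ} (ht : 0 ≤ t) :
    (cpl N μ P0 t).map Prod.snd = MNmeas N μ := by
  refine meas_eq_of_singletons fun T => ?_
  rw [cpl_sing_snd, Finset.sum_congr rfl fun S _ => inner_snd N μ hNpos ht P0 S T,
    ← Finset.sum_mul, P0_mass N μ P0 hP0, one_mul, MNmeas_singleton_card N μ hNpos]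

lemma cpl_cost (hNpos : 0 < N) (P0 : Measure (Fin N → ℕ)) [IsProbabilityMeasure P0]
    (hP0 : P0 ({S : Fin N → ℕ | ∑ i, S i = N * μ}ᶜ) = 0) {t : ℝ} (ht : 0 ≤ t) :
    ∫⁻ z, (∑ j : Fin N, (Nat.dist (z.1 j) (z.2 j) : ℝ≥0∞)) / (N : ℝ≥0∞) ∂(cpl N μ P0 t)
      ≤ ENNReal.ofReal (2 * μ * Real.exp (-t)) := by
  have hN' : (N:ℝ) ≠ 0 := Nat.cast_ne_zero.mpr hNpos.ne'
  rw [cpl, lintegral_sum_measure]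
  have hterm : ∀ x : {S // S ∈ lev N (N*μ)} × (Fin (N*μ) → Fin N × Fin N),
      (∫⁻ z, (∑ j : Fin N, (Nat.dist (z.1 j) (z.2 j) : ℝ≥0∞)) / (N : ℝ≥0∞)
          ∂(cplWt N μ P0 t x • Measure.dirac (cplPos N μ x)))
        = cplWt N μ P0 t x * ((∑ j : Fin N,
            (Nat.dist (cnt (fun k => (x.2 k).1) j) (cnt (fun k => (x.2 k).2) j) : ℝ≥0∞))
              / (N : ℝ≥0∞)) := by
    intro x
    rw [lintegral_smul_measure, lintegral_dirac]
    rfl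
  rw [tsum_congr hterm, tsum_fintype, Fintype.sum_prod_type]
  have hcostbound : ∀ dd : Fin (N*μ) → Fin N × Fin N,
      ((∑ j : Fin N,
          (Nat.dist (cnt (fun k => (dd k).1) j) (cnt (fun k => (dd k).2) j) : ℝ≥0∞))
            / (N : ℝ≥0∞))
        ≤ ENNReal.ofReal ((2 * ((Finset.univ.filter
            fun k => (dd k).1 ≠ (dd k).2).card : ℝ)) / (N:ℝ)) := by
    intro dd
    have hnatdiv : ∀ a : ℕ, ((a : ℝ≥0∞)) / (N : ℝ≥0∞) = ENNReal.ofReal ((a:ℝ)/(N:ℝ)) := by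
      intro a
      rw [ENNReal.ofReal_div_of_pos (by exact_mod_cast hNpos), ENNReal.ofReal_natCast,
        ENNReal.ofReal_natCast]
    calc (∑ j : Fin N,
          (Nat.dist (cnt (fun k => (dd k).1) j) (cnt (fun k => (dd k).2) j) : ℝ≥0∞))
            / (N : ℝ≥0∞)
        = ((∑ j : Fin N,
            Nat.dist (cnt (fun k => (dd k).1) j) (cnt (fun k => (dd k).2) j) : ℕ) : ℝ≥0∞)
              / (N : ℝ≥0∞) := by rw [Nat.cast_sum]
      _ ≤ ((2 * (Finset.univ.filter fun k => (dd k).1 ≠ (dd k).2).card : ℕ) : ℝ≥0∞)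
            / (N : ℝ≥0∞) :=
          ENNReal.div_le_div_right (Nat.cast_le.mpr (cost_le_mismatch dd)) _
      _ = ENNReal.ofReal ((2 * ((Finset.univ.filter
            fun k => (dd k).1 ≠ (dd k).2).card : ℝ)) / (N:ℝ)) := by
          rw [hnatdiv]
          push_cast
          ring_nf
  have hinner : ∀ S : {S // S ∈ lev N (N*μ)},
      (∑ dd : Fin (N*μ) → Fin N × Fin N, cplWt N μ P0 t (S, dd)
          * ((∑ j : Fin N,
            (Nat.dist (cnt (fun k => (dd k).1) j) (cnt (fun k => (dd k).2) j) : ℝ≥0∞))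
              / (N : ℝ≥0∞)))
        ≤ P0 {(S : Fin N → ℕ)} * ENNReal.ofReal (2 * μ * Real.exp (-t)) := by
    intro S
    have h1 : ∀ dd : Fin (N*μ) → Fin N × Fin N, cplWt N μ P0 t (S, dd)
        * ((∑ j : Fin N,
            (Nat.dist (cnt (fun k => (dd k).1) j) (cnt (fun k => (dd k).2) j) : ℝ≥0∞))
              / (N : ℝ≥0∞))
        ≤ P0 {(S : Fin N → ℕ)} * ENNReal.ofReal
            ((∏ k, nu N t (sigC N μ S k) (dd k).1 (dd k).2)
              * ((2 * ((Finset.univ.filter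
                fun k => (dd k).1 ≠ (dd k).2).card : ℝ)) / (N:ℝ))) := by
      intro dd
      unfold cplWt
      rw [mul_assoc, ENNReal.ofReal_mul
        (Finset.prod_nonneg fun k _ => nu_nonneg hNpos ht _ _ _)]
      exact mul_le_mul_right (mul_le_mul_right (hcostbound dd) _) _
    calc (∑ dd : Fin (N*μ) → Fin N × Fin N, cplWt N μ P0 t (S, dd)
          * ((∑ j : Fin N,
            (Nat.dist (cnt (fun k => (dd k).1) j) (cnt (fun k => (dd k).2) j) : ℝ≥0∞))
              / (N : ℝ≥0∞)))
        ≤ ∑ dd : Fin (N*μ) → Fin N × Fin N, P0 {(S : Fin N → ℕ)} * ENNReal.ofReal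
            ((∏ k, nu N t (sigC N μ S k) (dd k).1 (dd k).2)
              * ((2 * ((Finset.univ.filter
                fun k => (dd k).1 ≠ (dd k).2).card : ℝ)) / (N:ℝ))) :=
          Finset.sum_le_sum fun dd _ => h1 dd
      _ = P0 {(S : Fin N → ℕ)} * ENNReal.ofReal
            (∑ dd : Fin (N*μ) → Fin N × Fin N,
              (∏ k, nu N t (sigC N μ S k) (dd k).1 (dd k).2)
                * ((2 * ((Finset.univ.filter
                  fun k => (dd k).1 ≠ (dd k).2).card : ℝ)) / (N:ℝ))) := by
          rw [← Finset.mul_sum, ENNReal.ofReal_sum_of_nonneg]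
          intro dd _
          have := Finset.prod_nonneg fun k (_ : k ∈ Finset.univ) =>
            nu_nonneg hNpos ht (sigC N μ S k) (dd k).1 (dd k).2
          positivity
      _ ≤ P0 {(S : Fin N → ℕ)} * ENNReal.ofReal (2 * μ * Real.exp (-t)) := by
          refine mul_le_mul_right (ENNReal.ofReal_le_ofReal ?_) _
          have hre : ∀ dd : Fin (N*μ) → Fin N × Fin N,
              (∏ k, nu N t (sigC N μ S k) (dd k).1 (dd k).2)
                * ((2 * ((Finset.univ.filter
                  fun k => (dd k).1 ≠ (dd k).2).card : ℝ)) / (N:ℝ))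
              = (2/(N:ℝ)) * ((∏ k, nu N t (sigC N μ S k) (dd k).1 (dd k).2)
                  * ((Finset.univ.filter fun k => (dd k).1 ≠ (dd k).2).card : ℝ)) := by
            intro dd; ring
          rw [Finset.sum_congr rfl fun dd _ => hre dd, ← Finset.mul_sum]
          have hms := mismatch_sum_le (M := N*μ) hNpos ht (sigC N μ S)
          calc (2/(N:ℝ)) * (∑ dd : Fin (N*μ) → Fin N × Fin N,
                (∏ k, nu N t (sigC N μ S k) (dd k).1 (dd k).2)
                  * ((Finset.univ.filter fun k => (dd k).1 ≠ (dd k).2).card : ℝ))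
              ≤ (2/(N:ℝ)) * ((N*μ : ℕ) * Real.exp (-t)) := by
                refine mul_le_mul_of_nonneg_left hms (by positivity)
            _ = 2 * μ * Real.exp (-t) := by
                push_cast
                field_simp
  calc (∑ S : {S // S ∈ lev N (N*μ)}, ∑ dd : Fin (N*μ) → Fin N × Fin N,
        cplWt N μ P0 t (S, dd)
          * ((∑ j : Fin N,
            (Nat.dist (cnt (fun k => (dd k).1) j) (cnt (fun k => (dd k).2) j) : ℝ≥0∞))
              / (N : ℝ≥0∞)))
      ≤ ∑ S : {S // S ∈ lev N (N*μ)},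
          P0 {(S : Fin N → ℕ)} * ENNReal.ofReal (2 * μ * Real.exp (-t)) :=
        Finset.sum_le_sum fun S _ => hinner S
    _ = ENNReal.ofReal (2 * μ * Real.exp (-t)) := by
        rw [← Finset.sum_mul, P0_mass N μ P0 hP0, one_mul]

end Coupling

end PoorBiased

/-- Equilibration of the poor-biased dynamics towards the multinomial distribution:
if `P_0` is supported on `𝒜_{N,μ}`, then `W₁(P_t, M_N) ≤ 2 μ e^{-t}`. -/
theorem convergence_to_multinomial (N μ : ℕ) (hN : 2 ≤ N) (hμ : 1 ≤ μ)
    (P : ℝ → Measure (Fin N → ℕ)) (hP : IsMasterSolution P)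
    (hP0 : P 0 ({S : Fin N → ℕ | ∑ i, S i = N * μ}ᶜ) = 0) :
    ∀ t ∈ Set.Ici (0 : ℝ),
      W1 N (P t) (MNmeas N μ) ≤ ENNReal.ofReal (2 * μ * Real.exp (-t)) := by
  intro t ht
  have hNpos : 0 < N := lt_of_lt_of_le (by norm_num) hN
  have ht' : (0:ℝ) ≤ t := ht
  haveI : IsProbabilityMeasure (P 0) := hP.1 0 Set.self_mem_Ici
  have h1 := PoorBiased.cpl_fst N μ hNpos P hP hP0 ht
  have h2 := PoorBiased.cpl_snd N μ hNpos (P 0) hP0 ht'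
  have h3 := PoorBiased.cpl_cost N μ hNpos (P 0) hP0 ht'
  calc W1 N (P t) (MNmeas N μ)
      ≤ ∫⁻ z, (∑ j : Fin N, (Nat.dist (z.1 j) (z.2 j) : ℝ≥0∞)) / (N : ℝ≥0∞)
          ∂(PoorBiased.cpl N μ (P 0) t) := by
        refine iInf_le_of_le (PoorBiased.cpl N μ (P 0) t) ?_
        refine iInf_le_of_le h1 ?_
        exact iInf_le_of_le h2 le_rfl
    _ ≤ ENNReal.ofReal (2 * μ * Real.exp (-t)) := h3

end
end

section
/- For every integer m ≥ 1, the mean absolute deviation of a Poisson random variable Z with mean m about m is given exactly by E[|Z − m|] = 2·e^{−m}·m^{m+1}/m!; equivalently, ∑_{n=0}^∞ |n − m|·e^{−m}·mⁿ/n! = 2·e^{−m}·m^{m+1}/m!. -/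
lemma pmad_aux_sum (x : ℝ) : ∀ k : ℕ,
    ∑ i ∈ Finset.range (k + 1), (x - i) * x ^ i / i.factorial
      = x ^ (k + 1) / k.factorial := by
  intro k
  induction k with
  | zero => simp
  | succ k ih =>
    rw [Finset.sum_range_succ, ih]
    have hk : ((k + 1 : ℕ).factorial : ℝ) = (k + 1) * k.factorial := by
      simp [Nat.factorial_succ]
    have h0 : (k.factorial : ℝ) ≠ 0 := Nat.cast_ne_zero.mpr k.factorial_ne_zero
    have h1 : ((k:ℝ) + 1) ≠ 0 := by positivity
    field_simp [hk]
    rw [Nat.factorial_succ]; push_cast; ring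

lemma pmad_summable_aux (x : ℝ) : Summable (fun n : ℕ => (n : ℝ) * x ^ n / n.factorial) := by
  have h : Summable (fun n : ℕ => ((n + 1 : ℕ) : ℝ) * x ^ (n + 1) / (n + 1).factorial) := by
    have := (Real.summable_pow_div_factorial x).mul_left x
    apply this.congr
    intro n
    have : ((n + 1 : ℕ).factorial : ℝ) = (n + 1) * n.factorial := by
      simp [Nat.factorial_succ]
    have h0 : (n.factorial : ℝ) ≠ 0 := Nat.cast_ne_zero.mpr n.factorial_ne_zero
    have h1 : ((n:ℝ) + 1) ≠ 0 := by positivity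
    field_simp [this]
    rw [Nat.factorial_succ]; push_cast; ring
  exact (summable_nat_add_iff 1).mp h

/-- The mean absolute deviation of a Poisson random variable with integer mean `m`:
`∑_{n=0}^∞ |n - m| e^{-m} m^n / n! = 2 e^{-m} m^{m+1} / m!`. -/
theorem poisson_mean_absolute_deviation (m : ℕ) (hm : 1 ≤ m) :
    ∑' n : ℕ, |(n : ℝ) - (m : ℝ)| * Real.exp (-(m : ℝ)) * (m : ℝ) ^ n / n.factorial
      = 2 * Real.exp (-(m : ℝ)) * (m : ℝ) ^ (m + 1) / (m.factorial : ℝ) := by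
  set x : ℝ := (m : ℝ) with hxdef
  set c : ℝ := Real.exp (-x) with hcdef
  have hx : 0 ≤ x := by positivity
  have hc : 0 < c := Real.exp_pos _
  set f : ℕ → ℝ := fun n => |(n : ℝ) - x| * c * x ^ n / n.factorial with hf
  -- summability
  have hsum : Summable f := by
    have hmaj : Summable (fun n : ℕ => ((n : ℝ) + x) * c * x ^ n / n.factorial) := by
      have h1 := (pmad_summable_aux x).mul_left c
      have h2 := (Real.summable_pow_div_factorial x).mul_left (x * c)
      apply (h1.add h2).congr
      intro n; push_cast; ring
    apply Summable.of_nonneg_of_le _ _ hmaj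
    · intro n; positivity
    · intro n
      have habs : |(n : ℝ) - x| ≤ (n : ℝ) + x := by
        have := abs_sub (n : ℝ) x
        calc |(n : ℝ) - x| ≤ |(n:ℝ)| + |x| := abs_sub _ _
          _ = (n:ℝ) + x := by rw [abs_of_nonneg (by positivity), abs_of_nonneg hx]
      have hnn : (0:ℝ) ≤ c * x ^ n / n.factorial := by positivity
      simp only [hf]
      rw [div_le_div_iff_of_pos_right (by positivity : (0:ℝ) < (n.factorial : ℝ))] at *
      calc |(n : ℝ) - x| * c * x ^ n ≤ ((n:ℝ) + x) * c * x ^ n := by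
            apply mul_le_mul_of_nonneg_right _ (by positivity)
            exact mul_le_mul_of_nonneg_right habs (le_of_lt hc)
        _ = ((n:ℝ) + x) * c * x ^ n := rfl
  -- split at m+1
  have hsplit := Summable.sum_add_tsum_nat_add (m + 1) hsum
  rw [← hsplit]
  -- head sum
  have hhead : ∑ i ∈ Finset.range (m + 1), f i = c * (x ^ (m + 1) / m.factorial) := by
    have : ∀ i ∈ Finset.range (m + 1), f i = c * ((x - i) * x ^ i / i.factorial) := by
      intro i hi
      have hi' : (i : ℝ) ≤ x := by
        rw [hxdef]; exact_mod_cast Nat.lt_succ_iff.mp (Finset.mem_range.mp hi)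
      simp only [hf]
      rw [abs_of_nonpos (by linarith)]
      ring
    rw [Finset.sum_congr rfl this, ← Finset.mul_sum, pmad_aux_sum x m]
  -- tail sum
  have htail : ∑' n : ℕ, f (n + (m + 1)) = c * (x ^ (m + 1) / m.factorial) := by
    set b : ℕ → ℝ := fun n => x ^ (n + m + 1) / (n + m).factorial with hb
    have hterm : ∀ n : ℕ, f (n + (m + 1)) = c * (b n - b (n + 1)) := by
      intro n
      simp only [hf, hb]
      have habs : |((n + (m+1) : ℕ) : ℝ) - x| = (n : ℝ) + 1 := by
        rw [hxdef]; push_cast; rw [abs_of_nonneg (by linarith)]; ring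
      rw [habs]
      have hfac : (((n + (m+1)) : ℕ).factorial : ℝ) = ((n : ℝ) + m + 1) * ((n + m).factorial : ℝ) := by
        have : n + (m + 1) = (n + m) + 1 := by ring
        rw [this, Nat.factorial_succ]; push_cast; ring
      have h0 : ((n + m).factorial : ℝ) ≠ 0 := Nat.cast_ne_zero.mpr (Nat.factorial_ne_zero _)
      have h1 : ((n:ℝ) + m + 1) ≠ 0 := by positivity
      have hfac2 : (((n+1) + m).factorial : ℝ) = ((n : ℝ) + m + 1) * ((n + m).factorial : ℝ) := by
        have : (n + 1) + m = (n + m) + 1 := by ring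
        rw [this, Nat.factorial_succ]; push_cast; ring
      rw [hfac, hfac2]
      have hpow : x ^ (n + (m + 1)) = x ^ (n + m + 1) := by ring_nf
      have hpow2 : x ^ ((n + 1) + m + 1) = x * x ^ (n + m + 1) := by
        rw [show (n+1) + m + 1 = (n + m + 1) + 1 by ring, pow_succ]; ring
      rw [hpow, hpow2]
      field_simp
      ring_nf
      rw [hxdef]; ring
    have hsumtail : Summable (fun n : ℕ => f (n + (m + 1))) := hsum.comp_injective (add_left_injective (m+1))
    have hbtend : Filter.Tendsto b Filter.atTop (nhds 0) := by
      have h1 : Filter.Tendsto (fun n : ℕ => x ^ (n + m) / (n + m).factorial) Filter.atTop (nhds 0) :=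
        (FloorSemiring.tendsto_pow_div_factorial_atTop x).comp (Filter.tendsto_add_atTop_nat m)
      have := h1.const_mul x
      simp only [mul_zero] at this
      apply this.congr
      intro n
      simp only [hb]
      rw [show n + m + 1 = (n + m) + 1 by ring, pow_succ]
      ring
    have hpartial : ∀ N : ℕ, ∑ n ∈ Finset.range N, (b n - b (n + 1)) = b 0 - b N :=
      fun N => Finset.sum_range_sub' b N
    have hsb : Summable (fun n : ℕ => b n - b (n + 1)) := by
      apply (hsumtail.mul_left c⁻¹).congr
      intro n
      rw [hterm n, ← mul_assoc, inv_mul_cancel₀ (ne_of_gt hc), one_mul]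
    have hts : ∑' n : ℕ, (b n - b (n + 1)) = b 0 := by
      refine (hsb.hasSum_iff_tendsto_nat.mpr ?_).tsum_eq
      have : Filter.Tendsto (fun N : ℕ => b 0 - b N) Filter.atTop (nhds (b 0 - 0)) :=
        Filter.Tendsto.sub tendsto_const_nhds hbtend
      rw [sub_zero] at this
      apply this.congr
      intro N
      rw [hpartial N]
    calc ∑' n : ℕ, f (n + (m + 1)) = ∑' n : ℕ, c * (b n - b (n + 1)) := tsum_congr hterm
      _ = c * ∑' n : ℕ, (b n - b (n + 1)) := tsum_mul_left
      _ = c * b 0 := by rw [hts]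
      _ = c * (x ^ (m + 1) / m.factorial) := by simp [hb]
  rw [hhead, htail]
  ring
end
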